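/- arXiv:0706.2340 — 5 statements merged into one kernel-verified Lean document; each statement's English description precedes it below -/
import Mathlib

section
/- Let R be a commutative ring and n, a positive integers. Let M₀, M₁, …, M_{a−1} be n×n matrices over R, and let M_[a] be the an×an block matrix, with a×a array of n×n blocks indexed by 0,…,a−1, whose block in position (t+1, t) is M_t for 0 ≤ t ≤ a−2, whose block in position (0, a−1) is M_{a−1}, and all of whose other blocks are zero. Then in the polynomial ring R[T]: det(I_n − (M_{a−1}M_{a−2}⋯M₁M₀)·T^a) = det(I_{an} − M_[a]·T). -/
noncomputable section

/-- The `an × an` cyclic block matrix `M_[a]`: its `n × n` block in block-position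
`(t+1, t)` is `M_t` for `0 ≤ t ≤ a-2`, its block in position `(0, a-1)` is `M_{a-1}`,
and all other blocks vanish. -/
def blockCyc {R : Type*} [CommRing R] {a n : ℕ} (M : Fin a → Matrix (Fin n) (Fin n) R) :
    Matrix (Fin a × Fin n) (Fin a × Fin n) R :=
  fun rc cc => if (rc.1 : ℕ) = ((cc.1 : ℕ) + 1) % a then M cc.1 rc.2 cc.2 else 0

lemma blockCyc_apply {R : Type*} [CommRing R] {a n : ℕ}
    (M : Fin a → Matrix (Fin n) (Fin n) R) (t s : Fin a) (i j : Fin n) :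
    blockCyc M (t, i) (s, j) = if (t : ℕ) = ((s : ℕ) + 1) % a then M s i j else 0 := rfl

open Matrix in
/-- Key general lemma: `det (1 - M_[a]) = det (1 - M_{a-1} ⋯ M₀)` over any commutative
ring. -/
lemma blockCyc_det {S : Type*} [CommRing S] {n : ℕ} :
    ∀ (a : ℕ) (N : Fin (a + 1) → Matrix (Fin n) (Fin n) S),
      Matrix.det (1 - blockCyc N) = Matrix.det (1 - (List.ofFn N).reverse.prod) := by
  intro a
  induction a with
  | zero =>
    intro N
    let e : Fin n ≃ Fin 1 × Fin n :=
      { toFun := fun j => (0, j)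
        invFun := fun p => p.2
        left_inv := fun j => rfl
        right_inv := fun p => by
          obtain ⟨t, j⟩ := p
          rw [Subsingleton.elim (0 : Fin 1) t] }
    have h1 : ((1 : Matrix (Fin 1 × Fin n) (Fin 1 × Fin n) S) - blockCyc N).submatrix e e
        = 1 - N 0 := by
      ext i j
      show ((1 : Matrix (Fin 1 × Fin n) (Fin 1 × Fin n) S) - blockCyc N)
          ((0 : Fin 1), i) ((0 : Fin 1), j) = (1 - N 0) i j
      rw [Matrix.sub_apply, Matrix.sub_apply, blockCyc_apply]
      simp [Matrix.one_apply, Prod.ext_iff]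
    rw [← Matrix.det_submatrix_equiv_self e, h1]
    simp [List.ofFn_succ]
  | succ a ih =>
    intro N
    -- the merged family of `a+1` matrices
    let N' : Fin (a + 1) → Matrix (Fin n) (Fin n) S := fun t =>
      if (t : ℕ) < a then N t.succ else N 0 * N (Fin.last (a + 1))
    have hN'_lt : ∀ t : Fin (a + 1), (t : ℕ) < a → N' t = N t.succ :=
      fun t h => if_pos h
    have hN'_last : ∀ t : Fin (a + 1), ¬((t : ℕ) < a) →
        N' t = N 0 * N (Fin.last (a + 1)) := fun t h => if_neg h
    let e : (Fin n ⊕ Fin (a + 1) × Fin n) ≃ Fin (a + 2) × Fin n :=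
      { toFun := Sum.elim (fun j => ((0 : Fin (a + 2)), j)) (fun p => (p.1.succ, p.2))
        invFun := fun p => Fin.cases (Sum.inl p.2) (fun t => Sum.inr (t, p.2)) p.1
        left_inv := by rintro (j | ⟨t, j⟩) <;> simp
        right_inv := by
          rintro ⟨s, j⟩
          induction s using Fin.cases <;> simp }
    let Bm : Matrix (Fin n) (Fin (a + 1) × Fin n) S :=
      fun k q => -(if (q.1 : ℕ) = a then N (Fin.last (a + 1)) k q.2 else 0)
    let Cm : Matrix (Fin (a + 1) × Fin n) (Fin n) S :=
      fun p k => -(if (p.1 : ℕ) = 0 then N 0 p.2 k else 0)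
    let D0 : Matrix (Fin (a + 1) × Fin n) (Fin (a + 1) × Fin n) S :=
      fun p q => if (p.1 : ℕ) = (q.1 : ℕ) + 1 then N q.1.succ p.2 q.2 else 0
    have hsub : ((1 : Matrix (Fin (a + 2) × Fin n) (Fin (a + 2) × Fin n) S)
        - blockCyc N).submatrix e e = Matrix.fromBlocks 1 Bm Cm (1 - D0) := by
      ext (i | ⟨t, i⟩) (j | ⟨s, j⟩)
      · show ((1 : Matrix (Fin (a + 2) × Fin n) (Fin (a + 2) × Fin n) S)
            - blockCyc N) ((0 : Fin (a + 2)), i) ((0 : Fin (a + 2)), j)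
            = (1 : Matrix (Fin n) (Fin n) S) i j
        rw [Matrix.sub_apply, blockCyc_apply,
          if_neg (show ¬(((0 : Fin (a + 2)) : ℕ)
              = (((0 : Fin (a + 2)) : ℕ) + 1) % (a + 2)) by
            rw [Fin.val_zero, Nat.mod_eq_of_lt (by omega)]; omega), sub_zero]
        simp [Matrix.one_apply, Prod.ext_iff]
      · show ((1 : Matrix (Fin (a + 2) × Fin n) (Fin (a + 2) × Fin n) S)
            - blockCyc N) ((0 : Fin (a + 2)), i) (s.succ, j) = Bm i (s, j)
        rw [Matrix.sub_apply, Matrix.one_apply,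
          if_neg (show ¬(((0 : Fin (a + 2)), i) = (s.succ, j)) from fun h =>
            Fin.succ_ne_zero s (congrArg Prod.fst h).symm),
          zero_sub, blockCyc_apply]
        show _ = -(if (s : ℕ) = a then N (Fin.last (a + 1)) i j else 0)
        congr 1
        have hs : (s : ℕ) ≤ a := Nat.lt_succ_iff.mp s.isLt
        rcases eq_or_lt_of_le hs with hs' | hs'
        · have h1 : ((0 : Fin (a + 2)) : ℕ) = (((s.succ : Fin (a + 2)) : ℕ) + 1) % (a + 2) := by
            rw [Fin.val_zero, Fin.val_succ, hs']
            exact (Nat.mod_self _).symm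
          rw [if_pos h1, if_pos hs']
          have h2 : s.succ = Fin.last (a + 1) := by
            ext; simp [Fin.val_succ, hs']
          rw [h2]
        · rw [if_neg (show ¬(((0 : Fin (a + 2)) : ℕ)
              = (((s.succ : Fin (a + 2)) : ℕ) + 1) % (a + 2)) by
              rw [Fin.val_zero, Fin.val_succ, Nat.mod_eq_of_lt (by omega)]; omega),
            if_neg (by omega)]
      · show ((1 : Matrix (Fin (a + 2) × Fin n) (Fin (a + 2) × Fin n) S)
            - blockCyc N) (t.succ, i) ((0 : Fin (a + 2)), j) = Cm (t, i) j
        rw [Matrix.sub_apply, Matrix.one_apply,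
          if_neg (show ¬((t.succ, i) = ((0 : Fin (a + 2)), j)) from fun h =>
            Fin.succ_ne_zero t (congrArg Prod.fst h)),
          zero_sub, blockCyc_apply]
        show _ = -(if (t : ℕ) = 0 then N 0 i j else 0)
        congr 1
        have hm : (((0 : Fin (a + 2)) : ℕ) + 1) % (a + 2) = 1 := by
          rw [Fin.val_zero]; exact Nat.mod_eq_of_lt (by omega)
        rw [hm, Fin.val_succ]
        by_cases ht : (t : ℕ) = 0
        · rw [if_pos (by omega), if_pos ht]
        · rw [if_neg (by omega), if_neg ht]
      · show ((1 : Matrix (Fin (a + 2) × Fin n) (Fin (a + 2) × Fin n) S)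
            - blockCyc N) (t.succ, i) (s.succ, j)
            = ((1 : Matrix (Fin (a + 1) × Fin n) (Fin (a + 1) × Fin n) S) - D0) (t, i) (s, j)
        rw [Matrix.sub_apply, Matrix.sub_apply, blockCyc_apply,
          Matrix.one_apply, Matrix.one_apply]
        congr 1
        · exact if_congr (by simp [Prod.ext_iff, Fin.succ_inj]) rfl rfl
        · show _ = (if (t : ℕ) = (s : ℕ) + 1 then N s.succ i j else 0)
          have hs : (s : ℕ) ≤ a := Nat.lt_succ_iff.mp s.isLt
          rcases eq_or_lt_of_le hs with hs' | hs'
          · have hm : (((s.succ : Fin (a + 2)) : ℕ) + 1) % (a + 2) = 0 := by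
              rw [Fin.val_succ, hs']
              exact Nat.mod_self _
            rw [hm, if_neg (show ¬((t.succ : Fin (a + 2)) : ℕ) = 0 by
                rw [Fin.val_succ]; omega),
              if_neg (show ¬((t : ℕ) = (s : ℕ) + 1) by
                have := t.isLt; omega)]
          · have hm : (((s.succ : Fin (a + 2)) : ℕ) + 1) % (a + 2) = (s : ℕ) + 2 := by
              rw [Fin.val_succ]
              exact Nat.mod_eq_of_lt (by omega)
            rw [hm, Fin.val_succ]
            by_cases ht : (t : ℕ) = (s : ℕ) + 1
            · rw [if_pos (by omega), if_pos ht]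
            · rw [if_neg (by omega), if_neg ht]
    have hCB : ∀ (t s : Fin (a + 1)) (i j : Fin n), (Cm * Bm) ((t, i)) ((s, j))
        = if (t : ℕ) = 0 ∧ (s : ℕ) = a then (N 0 * N (Fin.last (a + 1))) i j else 0 := by
      intro t s i j
      rw [Matrix.mul_apply]
      by_cases ht : (t : ℕ) = 0 <;> by_cases hs : (s : ℕ) = a <;>
        simp_all [Matrix.mul_apply, Cm, Bm]
    have hC2 : (1 - D0) - Cm * Bm = 1 - blockCyc N' := by
      ext ⟨t, i⟩ ⟨s, j⟩
      rw [Matrix.sub_apply, Matrix.sub_apply, Matrix.sub_apply, hCB t s i j, sub_sub,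
        blockCyc_apply]
      congr 1
      show (if (t : ℕ) = (s : ℕ) + 1 then N s.succ i j else 0) + _ = _
      have hs0 : (s : ℕ) ≤ a := Nat.lt_succ_iff.mp s.isLt
      have ht0 : (t : ℕ) < a + 1 := t.isLt
      rcases eq_or_lt_of_le hs0 with hs' | hs'
      · rw [hN'_last s (by omega),
          if_neg (show ¬((t : ℕ) = (s : ℕ) + 1) by omega), zero_add,
          show ((s : ℕ) + 1) % (a + 1) = 0 by rw [hs']; exact Nat.mod_self _]
        by_cases ht : (t : ℕ) = 0
        · rw [if_pos ⟨ht, hs'⟩, if_pos ht]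
        · rw [if_neg (by tauto), if_neg ht]
      · rw [hN'_lt s hs', Nat.mod_eq_of_lt (by omega),
          if_neg (show ¬((t : ℕ) = 0 ∧ (s : ℕ) = a) by omega), add_zero]
    have hdet : Matrix.det ((1 : Matrix (Fin (a + 2) × Fin n) (Fin (a + 2) × Fin n) S)
        - blockCyc N) = Matrix.det (1 - blockCyc N') := by
      rw [← Matrix.det_submatrix_equiv_self e (1 - blockCyc N), hsub,
        Matrix.det_fromBlocks_one₁₁, hC2]
    rw [hdet, ih N']
    -- list product manipulation
    have hK : (fun i : Fin a => N' (Fin.castSucc i)) = fun i : Fin a => N i.castSucc.succ := by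
      funext i
      exact hN'_lt i.castSucc (by simpa using i.isLt)
    have h1 : (List.ofFn N').reverse.prod
        = (N 0 * N (Fin.last (a + 1)))
          * (List.ofFn fun i : Fin a => N i.castSucc.succ).reverse.prod := by
      rw [List.ofFn_succ' N', hK, hN'_last (Fin.last a) (by simp),
        List.concat_eq_append, List.reverse_append, List.reverse_singleton,
        List.singleton_append, List.prod_cons]
    have h2 : (List.ofFn N).reverse.prod
        = N (Fin.last (a + 1))
          * (List.ofFn fun i : Fin a => N i.castSucc.succ).reverse.prod * N 0 := by
      rw [List.ofFn_succ (f := N), List.reverse_cons, List.prod_append, List.prod_singleton,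
        List.ofFn_succ' (fun i : Fin (a + 1) => N i.succ), Fin.succ_last,
        List.concat_eq_append, List.reverse_append, List.reverse_singleton,
        List.singleton_append, List.prod_cons]
    rw [h1, h2, mul_assoc (N 0), Matrix.det_one_sub_mul_comm]

open Matrix Polynomial in
lemma listprod_aux {R : Type*} [CommRing R] {n : ℕ}
    (l : List (Matrix (Fin n) (Fin n) R)) :
    (l.map fun A => (Polynomial.X : Polynomial R) • A.map (Polynomial.C : R → Polynomial R)).prod
      = (Polynomial.X : Polynomial R) ^ l.length
          • (l.prod.map (Polynomial.C : R → Polynomial R)) := by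
  induction l with
  | nil => simp [Matrix.map_one]
  | cons A l ihl =>
    simp only [List.map_cons, List.prod_cons, ihl, List.length_cons]
    rw [show ((A * l.prod).map (Polynomial.C : R → Polynomial R))
        = A.map Polynomial.C * l.prod.map Polynomial.C from Matrix.map_mul,
      smul_mul_assoc, mul_smul_comm, smul_smul, pow_succ,
      mul_comm ((Polynomial.X : Polynomial R) ^ l.length) Polynomial.X]

/-- **Lemma 2.1 (transfer lemma for nuclear/finite matrices).**
For `n × n` matrices `M₀, …, M_{a-1}` over a commutative ring `R`,
`det(I_n - (M_{a-1} ⋯ M₁M₀)·T^a) = det(I_{an} - M_[a]·T)` in `R[T]`. -/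
theorem stmt_7 {R : Type*} [CommRing R] (a n : ℕ) (ha : 0 < a) (hn : 0 < n)
    (M : Fin a → Matrix (Fin n) (Fin n) R) :
    Matrix.det ((1 : Matrix (Fin n) (Fin n) (Polynomial R))
        - ((Polynomial.X : Polynomial R) ^ a) • (((List.ofFn fun t => M t).reverse.prod).map Polynomial.C))
      = Matrix.det ((1 : Matrix (Fin a × Fin n) (Fin a × Fin n) (Polynomial R))
        - (Polynomial.X : Polynomial R) • ((blockCyc M).map Polynomial.C)) := by
  obtain ⟨b, rfl⟩ : ∃ b, a = b + 1 := ⟨a - 1, by omega⟩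
  have h := blockCyc_det (S := Polynomial R) b
    (fun t => (Polynomial.X : Polynomial R) • (M t).map Polynomial.C)
  have hb : blockCyc (fun t => (Polynomial.X : Polynomial R) • (M t).map Polynomial.C)
      = (Polynomial.X : Polynomial R) • (blockCyc M).map Polynomial.C := by
    ext ⟨t, i⟩ ⟨s, j⟩
    rw [Matrix.smul_apply, Matrix.map_apply, blockCyc_apply, blockCyc_apply]
    simp [apply_ite (Polynomial.C : R → Polynomial R), apply_ite
      (fun p : Polynomial R => Polynomial.X * p)]
  have hl : (List.ofFn fun t => (Polynomial.X : Polynomial R) • (M t).map Polynomial.C)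
      = (List.ofFn M).map fun A => (Polynomial.X : Polynomial R) • A.map Polynomial.C := by
    rw [List.map_ofFn]
    rfl
  rw [hb, hl, ← List.map_reverse, listprod_aux] at h
  simp only [List.length_reverse, List.length_ofFn] at h
  exact h.symm

end
end

section
/- Let K be a field equipped with a valuation v : K → ℝ ∪ {+∞}, and let a, n, k be positive integers with k ≤ n. Let M₀, …, M_{a−1} be n×n matrices over K, and let c_k be the coefficient of T^k in det(I_n − (M_{a−1}⋯M₁M₀)·T) ∈ K[T]. Then v(c_k) ≥ Σ_{t=0}^{a−1} min_{W_t} v(det W_t), where for each t the minimum ranges over all k×k submatrices W_t of M_t (obtained by selecting any k rows and any k columns of M_t). -/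
noncomputable section

open Matrix Finset

namespace Stmt8Aux

variable {R : Type*} [CommRing R] {n k : ℕ}

lemma det_piecewise (S : Finset (Fin n)) (h : S.card = k) (B : Matrix (Fin n) (Fin n) R) :
    Matrix.det (Matrix.of (S.piecewise B (1 : Matrix (Fin n) (Fin n) R)))
      = (B.submatrix (S.orderEmbOfFin h) (S.orderEmbOfFin h)).det := by
  classical
  let e : {x // x ∈ S} ⊕ {x // x ∉ S} ≃ Fin n := Equiv.sumCompl (· ∈ S)
  rw [← Matrix.det_submatrix_equiv_self e]
  have hblock : (Matrix.of (S.piecewise B (1 : Matrix (Fin n) (Fin n) R))).submatrix e e =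
      Matrix.fromBlocks (B.submatrix Subtype.val Subtype.val)
        (B.submatrix Subtype.val Subtype.val) 0 1 := by
    ext i j
    cases i with
    | inl x =>
        cases j with
        | inl y =>
            simp [e, Matrix.submatrix_apply, Finset.piecewise, Finset.piecewise_eq_of_mem _ _ _ x.2]
        | inr y =>
            simp [e, Matrix.submatrix_apply, Finset.piecewise, Finset.piecewise_eq_of_mem _ _ _ x.2]
    | inr x =>
        cases j with
        | inl y =>
            have hne : x.val ≠ y.val := fun hxy => x.2 (hxy ▸ y.2)
            simp [e, Matrix.submatrix_apply, Finset.piecewise, x.2, Finset.piecewise_eq_of_notMem _ _ _ x.2,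
              Matrix.one_apply, hne]
        | inr y =>
            simp [e, Matrix.submatrix_apply, Finset.piecewise, x.2, Finset.piecewise_eq_of_notMem _ _ _ x.2,
              Matrix.one_apply, Subtype.ext_iff]
  rw [hblock, Matrix.det_fromBlocks_zero₂₁, Matrix.det_one, mul_one,
    ← Matrix.det_submatrix_equiv_self (S.orderIsoOfFin h).toEquiv, Matrix.submatrix_submatrix]
  congr 1 <;> funext i <;> exact Finset.coe_orderIsoOfFin_apply S h i

lemma det_piecewise_smul (c : R) (B : Matrix (Fin n) (Fin n) R) (S : Finset (Fin n)) :
    ∀ D : Matrix (Fin n) (Fin n) R,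
    Matrix.det (Matrix.of (S.piecewise (fun i => c • (B i : Fin n → R)) D))
      = c ^ S.card * Matrix.det (Matrix.of (S.piecewise B D)) := by
  classical
  induction S using Finset.induction_on with
  | empty => intro D; simp; congr 2
  | @insert j S hj ih =>
      intro D
      have h1 : (insert j S).piecewise (fun i => c • (B i : Fin n → R)) D
          = Function.update (S.piecewise (fun i => c • (B i : Fin n → R)) D) j (c • (B j : Fin n → R)) :=
        Finset.piecewise_insert _ _ _ _
      have h2 : Function.update (S.piecewise (fun i => c • (B i : Fin n → R)) D) j (B j : Fin n → R)
          = S.piecewise (fun i => c • (B i : Fin n → R)) (Function.update D j (B j)) := by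
        funext i
        by_cases hi : i ∈ S
        · have : i ≠ j := fun hij => hj (hij ▸ hi)
          simp [Function.update, this, Finset.piecewise, hi, Finset.piecewise_eq_of_mem _ _ _ hi]
        · by_cases hij : i = j
          · subst hij
            simp [Finset.piecewise, hi, Function.update, Finset.piecewise_eq_of_notMem _ _ _ hi]
          · simp [Function.update, hij, Finset.piecewise, hi, Finset.piecewise_eq_of_notMem _ _ _ hi]
      have h3 : (insert j S).piecewise B D
          = S.piecewise B (Function.update D j (B j)) := by
        funext i
        by_cases hi : i ∈ S
        · have : i ≠ j := fun hij => hj (hij ▸ hi)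
          simp [Finset.piecewise_insert, Function.update, this, Finset.piecewise, hi,
            Finset.piecewise_eq_of_mem _ _ _ hi]
        · by_cases hij : i = j
          · subst hij
            simp [Finset.piecewise_insert, Finset.piecewise, hi, Function.update, Finset.piecewise_eq_of_notMem _ _ _ hi]
          · simp [Finset.piecewise_insert, Function.update, hij, Finset.piecewise, hi,
              Finset.piecewise_eq_of_notMem _ _ _ hi]
      have key : Matrix.det (Matrix.of ((insert j S).piecewise (fun i => c • (B i : Fin n → R)) D))
          = c * Matrix.det (Matrix.of (S.piecewise (fun i => c • (B i : Fin n → R)) (Function.update D j (B j)))) := by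
        rw [h1, ← h2]
        exact (Matrix.detRowAlternating :
          (Fin n → R) [⋀^Fin n]→ₗ[R] R).map_update_smul _ j c (B j)
      rw [key, Finset.card_insert_of_notMem hj, pow_succ, congrArg (fun M => Matrix.det (Matrix.of M)) h3]
      linear_combination c * ih (Function.update D j (B j))


lemma binet (A B : Matrix (Fin n) (Fin n) R) (ρ γ : Fin k ↪ Fin n) :
    ((A * B).submatrix ρ γ).det =
      ∑ s : {s : Finset (Fin n) // s.card = k},
        (A.submatrix ρ (s.1.orderEmbOfFin s.2)).det *
          (B.submatrix (s.1.orderEmbOfFin s.2) γ).det := by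
  classical
  have expand : ((A * B).submatrix ρ γ).det
      = ∑ r : Fin k → Fin n, (∏ i, A (ρ i) (r i)) * (B.submatrix r γ).det := by
    have h1 : ((A * B).submatrix ρ γ)
        = Matrix.of (fun i => ∑ l : Fin n, A (ρ i) l • (fun j => B l (γ j))) := by
      ext i j
      simp [Matrix.mul_apply, Finset.sum_apply]
    rw [h1]
    have h2 := (Matrix.detRowAlternating :
        (Fin k → R) [⋀^Fin k]→ₗ[R] R).toMultilinearMap.map_sum
      (g := fun i l => A (ρ i) l • (fun j => B l (γ j)))
    have h3 : ∀ r : Fin k → Fin n,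
        (Matrix.detRowAlternating :
            (Fin k → R) [⋀^Fin k]→ₗ[R] R).toMultilinearMap
          (fun i => A (ρ i) (r i) • (fun j => B (r i) (γ j)))
        = (∏ i, A (ρ i) (r i)) * (B.submatrix r γ).det := by
      intro r
      have := (Matrix.detRowAlternating :
        (Fin k → R) [⋀^Fin k]→ₗ[R] R).toMultilinearMap.map_smul_univ
        (fun i => A (ρ i) (r i)) (fun i => (fun j => B (r i) (γ j)))
      rw [this]
      simp [smul_eq_mul]
      rfl
    calc Matrix.det (Matrix.of (fun i => ∑ l : Fin n, A (ρ i) l • (fun j => B l (γ j))))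
        = ∑ r : Fin k → Fin n,
            (Matrix.detRowAlternating :
                (Fin k → R) [⋀^Fin k]→ₗ[R] R).toMultilinearMap
              (fun i => A (ρ i) (r i) • (fun j => B (r i) (γ j))) := h2
      _ = _ := by
          exact Finset.sum_congr rfl fun r _ => h3 r
  rw [expand]
  set T : (Fin k → Fin n) → R :=
    fun r => (∏ i, A (ρ i) (r i)) * (B.submatrix r γ).det with hT
  have hzero : ∀ r : Fin k → Fin n, ¬ Function.Injective r → T r = 0 := by
    intro r hr
    rw [Function.not_injective_iff] at hr
    obtain ⟨x, y, hxy, hne⟩ := hr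
    have hrow : (B.submatrix r ⇑γ) x = (B.submatrix r ⇑γ) y := by
      funext j; simp [Matrix.submatrix_apply, hxy]
    simp [hT, Matrix.det_zero_of_row_eq hne hrow]
  have himage : ∀ (p : {s : Finset (Fin n) // s.card = k} × Equiv.Perm (Fin k)),
      Finset.univ.image (⇑(p.1.1.orderEmbOfFin p.1.2) ∘ ⇑p.2) = p.1.1 := by
    intro p
    ext x
    simp only [Finset.mem_image, Finset.mem_univ, true_and, Function.comp_apply]
    constructor
    · rintro ⟨i, rfl⟩; exact Finset.orderEmbOfFin_mem _ _ _
    · intro hx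
      have : x ∈ Set.range (p.1.1.orderEmbOfFin p.1.2) := by
        rw [Finset.range_orderEmbOfFin]; exact hx
      obtain ⟨i, hi⟩ := this
      exact ⟨p.2.symm i, by simp [hi]⟩
  have hfact : ∀ r : Fin k → Fin n, Function.Injective r →
      ∃ p : {s : Finset (Fin n) // s.card = k} × Equiv.Perm (Fin k),
        ⇑(p.1.1.orderEmbOfFin p.1.2) ∘ ⇑p.2 = r := by
    intro r hr
    have hs : (Finset.univ.image r).card = k := by
      rw [Finset.card_image_of_injective _ hr, Finset.card_univ, Fintype.card_fin]
    have hmem : ∀ i, r i ∈ Finset.univ.image r :=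
      fun i => Finset.mem_image_of_mem r (Finset.mem_univ i)
    set g : Fin k → {x // x ∈ Finset.univ.image r} := fun i => ⟨r i, hmem i⟩ with hg
    have hgbij : Function.Bijective g := by
      have hginj : Function.Injective g := fun a b hab =>
        hr (congrArg Subtype.val hab)
      exact (Fintype.bijective_iff_injective_and_card g).2
        ⟨hginj, by rw [Fintype.card_fin, Fintype.card_coe, hs]⟩
    refine ⟨(⟨Finset.univ.image r, hs⟩,
      (Equiv.ofBijective g hgbij).trans ((Finset.univ.image r).orderIsoOfFin hs).symm.toEquiv), ?_⟩
    funext i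
    show ((Finset.univ.image r).orderEmbOfFin hs)
        (((Finset.univ.image r).orderIsoOfFin hs).symm (g i)) = r i
    rw [← Finset.coe_orderIsoOfFin_apply, OrderIso.apply_symm_apply]
  have hgroup : ∑ r : Fin k → Fin n, T r
      = ∑ p : {s : Finset (Fin n) // s.card = k} × Equiv.Perm (Fin k),
          T (⇑(p.1.1.orderEmbOfFin p.1.2) ∘ ⇑p.2) := by
    rw [← Finset.sum_filter_of_ne
      (p := fun r : Fin k → Fin n => Function.Injective r)
      (fun r _ hne => by by_contra hc; exact hne (hzero r hc))]
    symm
    apply Finset.sum_nbij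
      (i := fun p : {s : Finset (Fin n) // s.card = k} × Equiv.Perm (Fin k) =>
        ⇑(p.1.1.orderEmbOfFin p.1.2) ∘ ⇑p.2)
    · intro p _
      simp only [Finset.mem_filter, Finset.mem_univ, true_and]
      exact (p.1.1.orderEmbOfFin p.1.2).injective.comp p.2.injective
    · intro p _ q _ hpq
      obtain ⟨⟨s, hs⟩, σ⟩ := p
      obtain ⟨⟨s', hs'⟩, σ'⟩ := q
      have hpq' : ⇑(s.orderEmbOfFin hs) ∘ ⇑σ = ⇑(s'.orderEmbOfFin hs') ∘ ⇑σ' := hpq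
      have hss : s = s' := by
        have h1 := himage (⟨s, hs⟩, σ)
        have h2 := himage (⟨s', hs'⟩, σ')
        simp only at h1 h2
        rw [← h1, ← h2, hpq']
      subst hss
      have hσ : σ = σ' := by
        refine Equiv.ext fun i => ?_
        have := congrFun hpq' i
        simp only [Function.comp_apply] at this
        exact (s.orderEmbOfFin hs).injective this
      simp [hσ]
    · intro r hr
      simp only [Finset.coe_filter, Finset.mem_univ, true_and, Set.mem_setOf_eq] at hr
      obtain ⟨p, hp⟩ := hfact r hr
      exact ⟨p, by simp, hp⟩
    · intro p _; rfl
  rw [hgroup, Fintype.sum_prod_type]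
  refine Finset.sum_congr rfl fun s _ => ?_
  set emb := s.1.orderEmbOfFin s.2 with hemb
  have hterm : ∀ σ : Equiv.Perm (Fin k),
      T (⇑emb ∘ ⇑σ)
        = ((Equiv.Perm.sign σ : ℤ) : R) * (∏ i, (A.submatrix ⇑ρ ⇑emb) i (σ i))
            * (B.submatrix ⇑emb ⇑γ).det := by
    intro σ
    have hsub : B.submatrix (⇑emb ∘ ⇑σ) ⇑γ = (B.submatrix ⇑emb ⇑γ).submatrix ⇑σ id := by
      rw [Matrix.submatrix_submatrix]
      simp
    rw [hT]
    simp only [hsub, Matrix.det_permute]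
    simp only [Matrix.submatrix_apply, Function.comp_apply]
    ring
  rw [Finset.sum_congr rfl (fun σ _ => hterm σ), ← Finset.sum_mul]
  congr 1
  rw [← Matrix.det_transpose (A.submatrix ⇑ρ ⇑emb), Matrix.det_apply']
  refine Finset.sum_congr rfl fun σ _ => ?_
  congr 1

variable {K : Type*} [Field K] {n k : ℕ}

section Val
variable (v : K → EReal) (hv0 : ∀ x, v x = ⊤ ↔ x = 0)
  (hvmul : ∀ x y, v (x * y) = v x + v y)
  (hvadd : ∀ x y, min (v x) (v y) ≤ v (x + y))

include hv0 hvmul in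
lemma v_one : v 1 = 0 := by
  have h1 : v 1 ≠ ⊤ := fun h => one_ne_zero ((hv0 1).mp h)
  have hb : v 1 ≠ ⊥ := by
    intro hbot
    have := hvmul 0 1
    rw [zero_mul, (hv0 0).mpr rfl, hbot, EReal.add_bot] at this
    exact (by simp : (⊤ : EReal) ≠ ⊥) this
  have h2 : v 1 = v 1 + v 1 := by rw [← hvmul 1 1, one_mul]
  have hr := EReal.coe_toReal h1 hb
  rw [← hr, ← EReal.coe_add, EReal.coe_eq_coe_iff] at h2
  have : (v 1).toReal = 0 := by linarith
  rw [← hr, this, EReal.coe_zero]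

include hv0 hvmul in
lemma v_neg (x : K) : v (-x) = v x := by
  have h1 : v (-1 : K) ≠ ⊤ := fun h => (by simp : (-1 : K) ≠ 0) ((hv0 (-1)).mp h)
  have hb : v (-1 : K) ≠ ⊥ := by
    intro hbot
    have := hvmul (-1) (-1)
    rw [neg_mul_neg, one_mul, v_one v hv0 hvmul, hbot, EReal.add_bot] at this
    simp at this
  have h2 : v (-1 : K) + v (-1 : K) = 0 := by
    rw [← hvmul (-1) (-1), neg_mul_neg, one_mul, v_one v hv0 hvmul]
  have hr := EReal.coe_toReal h1 hb
  rw [← hr, ← EReal.coe_add, show ((0:EReal) = ((0:ℝ):EReal)) from rfl,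
    EReal.coe_eq_coe_iff] at h2
  have hm1 : v (-1 : K) = 0 := by
    rw [← hr, show (v (-1:K)).toReal = 0 by linarith, EReal.coe_zero]
  calc v (-x) = v ((-1) * x) := by rw [neg_one_mul]
    _ = v (-1) + v x := hvmul _ _
    _ = v x := by rw [hm1, zero_add]

include hv0 hvadd in
lemma v_sum {α : Type*} (s : Finset α) (f : α → K) (c : EReal)
    (h : ∀ i ∈ s, c ≤ v (f i)) : c ≤ v (∑ i ∈ s, f i) := by
  classical
  induction s using Finset.cons_induction with
  | empty => simp [(hv0 0).mpr rfl]
  | cons a s ha ih =>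
      rw [Finset.sum_cons]
      refine le_trans ?_ (hvadd _ _)
      exact le_min (h a (Finset.mem_cons_self a s))
        (ih fun i hi => h i (Finset.mem_cons.mpr (Or.inr hi)))

end Val

section Key
variable (v : K → EReal) (hv0 : ∀ x, v x = ⊤ ↔ x = 0)
  (hvmul : ∀ x y, v (x * y) = v x + v y)
  (hvadd : ∀ x y, min (v x) (v y) ≤ v (x + y))

include hv0 hvmul hvadd in
lemma key (L : List (Matrix (Fin n) (Fin n) K)) (hL : L ≠ []) :
    ∀ ρ γ : Fin k ↪ Fin n,
      (L.map (fun A => ⨅ (ρ' : Fin k ↪ Fin n) (γ' : Fin k ↪ Fin n),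
        v ((A.submatrix ρ' γ').det))).sum ≤ v ((L.prod.submatrix ρ γ).det) := by
  induction L with
  | nil => exact absurd rfl hL
  | cons A L ih =>
      intro ρ γ
      cases L with
      | nil =>
          simp only [List.map_cons, List.map_nil, List.sum_cons, List.sum_nil, add_zero,
            List.prod_cons, List.prod_nil, mul_one]
          exact iInf_le_of_le ρ (iInf_le _ γ)
      | cons B L' =>
          rw [List.prod_cons, binet A (B :: L').prod ρ γ]
          refine v_sum v hv0 hvadd _ _ _ (fun s _ => ?_)
          rw [hvmul, List.map_cons, List.sum_cons]
          exact add_le_add (iInf₂_le _ _)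
            (ih (by simp) (s.1.orderEmbOfFin s.2).toEmbedding γ)

end Key
end Stmt8Aux

/-- **Lemma 2.2.**  Let `K` be a field with a (non-archimedean, additive) valuation `v`,
and let `M₀, …, M_{a-1}` be `n × n` matrices over `K`.  If `c_k` is the coefficient of
`T^k` in `det(I_n - (M_{a-1} ⋯ M₁M₀)·T)`, then
`v(c_k) ≥ ∑_{t=0}^{a-1} min_{W_t} v(det W_t)`, the minimum ranging over all `k × k`
submatrices `W_t` of `M_t` (any `k` rows and any `k` columns). -/
theorem stmt_8 {K : Type*} [Field K] (v : K → EReal)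
    (hv0 : ∀ x, v x = ⊤ ↔ x = 0)
    (hvmul : ∀ x y, v (x * y) = v x + v y)
    (hvadd : ∀ x y, min (v x) (v y) ≤ v (x + y))
    (a n k : ℕ) (ha : 0 < a) (hn : 0 < n) (hk : 0 < k) (hkn : k ≤ n)
    (M : Fin a → Matrix (Fin n) (Fin n) K) :
    ∑ t : Fin a, ⨅ (ρ : Fin k ↪ Fin n) (γ : Fin k ↪ Fin n), v (((M t).submatrix ρ γ).det)
      ≤ v (Polynomial.coeff
            (Matrix.det ((1 : Matrix (Fin n) (Fin n) (Polynomial K))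
              - (Polynomial.X : Polynomial K) •
                  (((List.ofFn fun t => M t).reverse.prod).map Polynomial.C))) k) := by
  classical
  open Stmt8Aux Polynomial in
  set P : Matrix (Fin n) (Fin n) K := ((List.ofFn fun t => M t).reverse.prod) with hP
  set Pc : Matrix (Fin n) (Fin n) (Polynomial K) := P.map Polynomial.C with hPc
  have hdet : Matrix.det ((1 : Matrix (Fin n) (Fin n) (Polynomial K))
        - (Polynomial.X : Polynomial K) • Pc)
      = ∑ S : Finset (Fin n), (-(Polynomial.X : Polynomial K)) ^ S.card *
          Polynomial.C (Matrix.det (Matrix.of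
            (S.piecewise P (1 : Matrix (Fin n) (Fin n) K)))) := by
    rw [sub_eq_neg_add]
    have h1 : Matrix.det ((-((Polynomial.X : Polynomial K) • Pc)) + 1)
        = ∑ S : Finset (Fin n),
            (Matrix.detRowAlternating :
              (Fin n → Polynomial K) [⋀^Fin n]→ₗ[Polynomial K] Polynomial K).toMultilinearMap
              (S.piecewise (-((Polynomial.X : Polynomial K) • Pc))
                (1 : Matrix (Fin n) (Fin n) (Polynomial K))) :=
      MultilinearMap.map_add_univ _ _ _
    rw [h1]
    refine Finset.sum_congr rfl fun S _ => ?_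
    have h2 : (-((Polynomial.X : Polynomial K) • Pc))
        = (fun i => (-(Polynomial.X : Polynomial K)) • (Pc i : Fin n → Polynomial K)) := by
      funext i j
      simp [neg_mul]
    have h3 : (Matrix.detRowAlternating :
          (Fin n → Polynomial K) [⋀^Fin n]→ₗ[Polynomial K] Polynomial K).toMultilinearMap
          (S.piecewise (-((Polynomial.X : Polynomial K) • Pc))
            (1 : Matrix (Fin n) (Fin n) (Polynomial K)))
        = Matrix.det (Matrix.of (S.piecewise
            (fun i => (-(Polynomial.X : Polynomial K)) • (Pc i : Fin n → Polynomial K))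
            (1 : Matrix (Fin n) (Fin n) (Polynomial K)))) := by
      rw [← h2]; rfl
    rw [h3, Stmt8Aux.det_piecewise_smul]
    congr 1
    have h4 : Matrix.of (S.piecewise Pc (1 : Matrix (Fin n) (Fin n) (Polynomial K)))
        = (Matrix.of (S.piecewise P (1 : Matrix (Fin n) (Fin n) K))).map Polynomial.C := by
      ext i j
      by_cases hi : i ∈ S
      · simp [Finset.piecewise, hi, Finset.piecewise_eq_of_mem _ _ _ hi, hPc, Matrix.map_apply]
      · simp [Finset.piecewise, hi, Finset.piecewise_eq_of_notMem _ _ _ hi, Matrix.map_apply,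
          Matrix.one_apply, apply_ite]
    rw [h4, ← RingHom.mapMatrix_apply, ← RingHom.map_det]
  rw [hdet, Polynomial.finset_sum_coeff]
  have hcoeff : ∀ S : Finset (Fin n),
      Polynomial.coeff ((-(Polynomial.X : Polynomial K)) ^ S.card *
        Polynomial.C (Matrix.det (Matrix.of
          (S.piecewise P (1 : Matrix (Fin n) (Fin n) K))))) k
      = if S.card = k then
          (-1) ^ S.card * Matrix.det (Matrix.of (S.piecewise P (1 : Matrix (Fin n) (Fin n) K)))
        else 0 := by
    intro S
    have h5 : (-(Polynomial.X : Polynomial K)) ^ S.card *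
        Polynomial.C (Matrix.det (Matrix.of (S.piecewise P (1 : Matrix (Fin n) (Fin n) K))))
        = Polynomial.C ((-1) ^ S.card *
            Matrix.det (Matrix.of (S.piecewise P (1 : Matrix (Fin n) (Fin n) K)))) *
            (Polynomial.X : Polynomial K) ^ S.card := by
      rw [neg_pow, _root_.map_mul, map_pow, map_neg, Polynomial.C_1]
      ring
    rw [h5, Polynomial.coeff_C_mul, Polynomial.coeff_X_pow]
    by_cases h : S.card = k
    · rw [if_pos h.symm, if_pos h, mul_one]
    · rw [if_neg (fun h' => h h'.symm), if_neg h, mul_zero]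
  rw [Finset.sum_congr rfl fun S _ => hcoeff S]
  refine Stmt8Aux.v_sum v hv0 hvadd _ _ _ (fun S _ => ?_)
  by_cases hSk : S.card = k
  · rw [if_pos hSk]
    have hd := Stmt8Aux.det_piecewise S hSk P
    have hkey := Stmt8Aux.key v hv0 hvmul hvadd ((List.ofFn fun t => M t).reverse)
      (by simp only [ne_eq, List.reverse_eq_nil_iff, List.ofFn_eq_nil_iff]; omega)
      (S.orderEmbOfFin hSk).toEmbedding (S.orderEmbOfFin hSk).toEmbedding
    have hsum : ((List.ofFn fun t => M t).reverse.map
        (fun A => ⨅ (ρ' : Fin k ↪ Fin n) (γ' : Fin k ↪ Fin n),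
          v ((A.submatrix ρ' γ').det))).sum
        = ∑ t : Fin a, ⨅ (ρ : Fin k ↪ Fin n) (γ : Fin k ↪ Fin n),
            v (((M t).submatrix ρ γ).det) := by
      rw [List.map_reverse, List.sum_reverse, List.map_ofFn, List.sum_ofFn]
      rfl
    rw [← hsum]
    rcases Nat.even_or_odd S.card with he | ho
    · rw [he.neg_one_pow, one_mul, hd]
      exact hkey
    · rw [ho.neg_one_pow, neg_one_mul, Stmt8Aux.v_neg v hv0 hvmul, hd]
      exact hkey
  · rw [if_neg hSk]
    exact le_trans le_top (le_of_eq ((hv0 0).mpr rfl).symm)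

end
end

section
/- Let p be a prime, s ≥ 1 with p ∤ s, and d₁, d₂ ≥ 1. For 0 ≤ k ≤ s(d₁+d₂), let HS(k) be the sum of the k smallest elements (with multiplicity) of the Hodge–Stickelberger slope multiset and HP(k) the sum of the k smallest elements of the Hodge slope multiset {0,1} ∪ {j/(sd₁) : 1 ≤ j ≤ sd₁−1} ∪ {j/(sd₂) : 1 ≤ j ≤ sd₂−1}. Then: (i) HS(k) ≥ HP(k) for all 0 ≤ k ≤ s(d₁+d₂); (ii) HS(0) = HP(0) = 0 and HS(s(d₁+d₂)) = HP(s(d₁+d₂)) = s(d₁+d₂)/2 (the two polygons share endpoints); and (iii) HS(k) = HP(k) for all k if and only if p ≡ 1 (mod s). -/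
open scoped Classical

noncomputable section

abbrev Qbar : Type := AlgebraicClosure ℚ

/-- Exponential of a power series with zero constant term (truncated sum is exact). -/
noncomputable def myExp (f : PowerSeries Qbar) : PowerSeries Qbar :=
  PowerSeries.mk fun k =>
    ∑ n ∈ Finset.range (k + 1), PowerSeries.coeff k (f ^ n) * ((n.factorial : Qbar))⁻¹

/-- The L-series `exp (∑_{k ≥ 1} S k · T^k / k)` attached to a sequence of sums. -/
noncomputable def Lser (S : ℕ → Qbar) : PowerSeries Qbar :=
  myExp (PowerSeries.mk fun k => if k = 0 then 0 else S k * ((k : Qbar))⁻¹)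

/-- The additive character ψ(y) = ζ^(Tr_{F/𝔽_p}(y)) of the Galois field with p^n elements. -/
noncomputable def psi (p : ℕ) [Fact p.Prime] (n : ℕ) (ζ : Qbar) (y : GaloisField p n) : Qbar :=
  ζ ^ (Algebra.trace (ZMod p) (GaloisField p n) y).val

/-- Evaluation at `x^t` of the Laurent polynomial `∑_{i=-d₂}^{d₁} ac i · X^i`. -/
noncomputable def laurentEval (p : ℕ) [Fact p.Prime] (n d₁ d₂ t : ℕ)
    (ac : ℤ → GaloisField p n) (x : (GaloisField p n)ˣ) : GaloisField p n :=
  ∑ i ∈ Finset.Icc (-(d₂ : ℤ)) (d₁ : ℤ),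
    ac i * ((x ^ ((t : ℤ) * i) : (GaloisField p n)ˣ) : GaloisField p n)

/-- Twisted exponential sum `∑_{x ∈ F^×} ψ(P(x^t)) · χ(x)`. -/
noncomputable def expSum (p : ℕ) [Fact p.Prime] (n d₁ d₂ t : ℕ) (ζ : Qbar)
    (ac : ℤ → GaloisField p n) (χ : (GaloisField p n)ˣ → Qbar) : Qbar :=
  ∑ᶠ x : (GaloisField p n)ˣ, psi p n ζ (laurentEval p n d₁ d₂ t ac x) * χ x

/-- The family of exponential sums `S_k(P̄(x^s))`, for `P̄` with coefficients `aco` over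
`𝔽_q = GaloisField p m`, evaluated over `𝔽_{q^k}` via the embeddings `ι`. -/
noncomputable def SfunPow (p : ℕ) [Fact p.Prime] (m d₁ d₂ s : ℕ) (ζ : Qbar)
    (aco : ℤ → GaloisField p m)
    (ι : (k : ℕ) → GaloisField p m →+* GaloisField p (m * (k + 1))) : ℕ → Qbar
  | 0 => 0
  | (k + 1) => expSum p (m * (k + 1)) d₁ d₂ s ζ (fun i => ι k (aco i)) (fun _ => 1)

/-- Norm map relative to an embedding of Galois fields. -/
noncomputable def normTo (p : ℕ) [Fact p.Prime] (m n : ℕ)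
    (ι : GaloisField p m →+* GaloisField p n) (x : GaloisField p n) : GaloisField p m :=
  letI := ι.toAlgebra
  Algebra.norm (GaloisField p m) x

/-- The family of twisted exponential sums `S_k(P̄, χ_s^r)`, where `χ_s = χ ∘ N` on each level. -/
noncomputable def SfunTw (p : ℕ) [Fact p.Prime] (m d₁ d₂ r : ℕ) (ζ : Qbar)
    (aco : ℤ → GaloisField p m)
    (ι : (k : ℕ) → GaloisField p m →+* GaloisField p (m * (k + 1)))
    (χ : MulChar (GaloisField p m) Qbar) : ℕ → Qbar
  | 0 => 0
  | (k + 1) => expSum p (m * (k + 1)) d₁ d₂ 1 ζ (fun i => ι k (aco i))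
      (fun x => (χ (normTo p m (m * (k + 1)) (ι k) (x : GaloisField p (m * (k + 1))))) ^ r)

/-- The orbit of `r` under multiplication by `ν` on `ℤ/s`. -/
noncomputable def orb (s ν : ℕ) (r : ZMod s) : Finset (ZMod s) :=
  Finset.image (fun t => (ν : ZMod s) ^ t * r) (Finset.range (s + 1))

/-- λ of the orbit of `r`: `(∑_{j ∈ orbit} j) / (s · ℓ)`. -/
noncomputable def lam (s ν : ℕ) (r : ZMod s) : ℚ :=
  (∑ j ∈ orb s ν r, (j.val : ℚ)) / ((s : ℚ) * (orb s ν r).card)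

/-- Slope multiset of the Hodge–Stickelberger polygon `HS(𝔸_{d₁,d₂}, ν, s)`. -/
noncomputable def HSslopes (d₁ d₂ s ν : ℕ) : Multiset ℚ :=
  (Multiset.range s).bind fun r =>
    (Multiset.range d₁).map (fun m => ((m : ℚ) + 1 - lam s ν (r : ZMod s)) / d₁)
      + (Multiset.range d₂).map (fun m => ((m : ℚ) + lam s ν (r : ZMod s)) / d₂)

/-- Slope multiset of the twisted Hodge–Stickelberger polygon `HS(𝔸_{d₁,d₂}, ν, χ_s^r)`. -/
noncomputable def HSrslopes (d₁ d₂ s ν : ℕ) (r : ZMod s) : Multiset ℚ :=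
  (Multiset.range d₁).map (fun m => ((m : ℚ) + 1 - lam s ν r) / d₁)
    + (Multiset.range d₂).map (fun m => ((m : ℚ) + lam s ν r) / d₂)

/-- Sum of the `k` smallest elements of a multiset of rationals. -/
noncomputable def partialSum (M : Multiset ℚ) (k : ℕ) : ℚ :=
  ((M.sort (· ≤ ·)).take k).sum

/-- Linear interpolation at abscissa `k` between the points `(i, y i)` and `(j, y j)`. -/
noncomputable def interp (y : ℕ → EReal) (k i j : ℕ) : EReal :=
  if i = j then y k
  else (((((j : ℝ) - (k : ℝ)) / ((j : ℝ) - (i : ℝ))) : ℝ) : EReal) * y i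
      + (((((k : ℝ) - (i : ℝ)) / ((j : ℝ) - (i : ℝ))) : ℝ) : EReal) * y j

/-- Height at integer abscissa `k` of the lower convex hull (Newton polygon) of the points
`(i, y i)`, `0 ≤ i ≤ N`. -/
noncomputable def NPheight (y : ℕ → EReal) (N k : ℕ) : EReal :=
  ⨅ c ∈ Finset.range (k + 1) ×ˢ Finset.Icc k N, interp y k c.1 c.2

/-- A (non-archimedean, additive) valuation on `ℚ̄` extending the `p`-adic valuation,
normalized by `v p = 1`. -/
structure PadicVal (p : ℕ) where
  v : Qbar → EReal
  zero_iff : ∀ x, v x = ⊤ ↔ x = 0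
  vmul : ∀ x y, v (x * y) = v x + v y
  vadd : ∀ x y, min (v x) (v y) ≤ v (x + y)
  vp : v (p : Qbar) = 1


/-- Coercion ℚ → EReal. -/
noncomputable def qe (x : ℚ) : EReal := ((x : ℝ) : EReal)


/-- Slope multiset of the Hodge polygon `HP(𝔸_{sd₁,sd₂})`. -/
noncomputable def HPslopes (s d₁ d₂ : ℕ) : Multiset ℚ :=
  ({0, 1} : Multiset ℚ)
    + (Multiset.range (s * d₁ - 1)).map (fun j => ((j : ℚ) + 1) / ((s : ℚ) * d₁))
    + (Multiset.range (s * d₂ - 1)).map (fun j => ((j : ℚ) + 1) / ((s : ℚ) * d₂))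



section RK14Helpers



noncomputable def Tfn (M : Multiset ℚ) (c : ℚ) : ℚ := (M.map (fun x => max (c - x) 0)).sum

lemma list_sum_map_sub (l : List ℚ) (f g : ℚ → ℚ) :
    (l.map fun x => f x - g x).sum = (l.map f).sum - (l.map g).sum := by
  induction l with
  | nil => simp
  | cons a l ih => simp [ih]; ring

lemma list_sum_map_const (l : List ℚ) (c : ℚ) : (l.map fun _ => c).sum = l.length * c := by
  induction l with
  | nil => simp
  | cons a l ih => simp [ih]; ring

lemma partialSum_zero (M : Multiset ℚ) : partialSum M 0 = 0 := rfl

lemma partialSum_card (M : Multiset ℚ) : partialSum M (Multiset.card M) = M.sum := by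
  unfold partialSum
  rw [← Multiset.length_sort (α := ℚ) (· ≤ ·) (s := M), List.take_length]
  conv_rhs => rw [← Multiset.sort_eq M (· ≤ ·)]
  exact (Multiset.sum_coe _).symm

lemma Tfn_sort (M : Multiset ℚ) (c : ℚ) :
    Tfn M c = ((M.sort (· ≤ ·)).map (fun x => max (c - x) 0)).sum := by
  conv_lhs => rw [Tfn, ← Multiset.sort_eq M (· ≤ ·)]
  rw [Multiset.map_coe, Multiset.sum_coe]

lemma le_partialSum (M : Multiset ℚ) (k : ℕ) (hk : k ≤ Multiset.card M) (c : ℚ) :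
    k * c - Tfn M c ≤ partialSum M k := by
  set l := M.sort (· ≤ ·) with hl
  have hlen : l.length = Multiset.card M := Multiset.length_sort _
  have hlen' : (l.take k).length = k := by
    rw [List.length_take, hlen]; exact min_eq_left hk
  have h1 : ((l.take k).map fun x => c - max (c - x) 0).sum ≤ ((l.take k).map id).sum := by
    apply List.sum_le_sum
    intro x _
    rcases le_total c x with h | h
    · rw [max_eq_right (sub_nonpos.mpr h)]; simpa using h
    · rw [max_eq_left (sub_nonneg.mpr h)]; simp
  rw [List.map_id] at h1
  have h2 : ((l.take k).map fun x => c - max (c - x) 0).sum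
      = k * c - ((l.take k).map fun x => max (c - x) 0).sum := by
    rw [list_sum_map_sub (l.take k) (fun _ => c) (fun x => max (c - x) 0),
      list_sum_map_const, hlen']
  have h3 : ((l.take k).map fun x => max (c - x) 0).sum ≤ Tfn M c := by
    rw [Tfn_sort, ← hl, ← List.take_append_drop k l, List.map_append, List.sum_append,
      List.take_append_drop]
    have : 0 ≤ ((l.drop k).map fun x => max (c - x) 0).sum := by
      apply List.sum_nonneg
      intro x hx
      simp only [List.mem_map] at hx
      obtain ⟨y, _, rfl⟩ := hx
      exact le_max_right _ _
    linarith
  unfold partialSum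
  rw [← hl]
  linarith [h1, h2.symm.le]

lemma partialSum_attain (M : Multiset ℚ) (k : ℕ) (hk : k < Multiset.card M) :
    ∃ c : ℚ, partialSum M k = k * c - Tfn M c := by
  set l := M.sort (· ≤ ·) with hl
  have hlen : l.length = Multiset.card M := Multiset.length_sort _
  have hkl : k < l.length := by rw [hlen]; exact hk
  obtain ⟨c, hcd⟩ : ∃ c, l.drop k = c :: l.drop (k + 1) :=
    ⟨l[k], List.drop_eq_getElem_cons hkl⟩
  refine ⟨c, ?_⟩
  have hsorted : l.Pairwise (· ≤ ·) := Multiset.pairwise_sort _ _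
  have hpw : List.Pairwise (· ≤ ·) (l.take k ++ l.drop k) := by
    rw [List.take_append_drop]; exact hsorted
  rw [List.pairwise_append] at hpw
  have hmemc : c ∈ l.drop k := by rw [hcd]; exact List.mem_cons_self
  have htake : ∀ x ∈ l.take k, x ≤ c := fun x hx => hpw.2.2 x hx _ hmemc
  have hdrople : ∀ x ∈ l.drop k, c ≤ x := by
    intro x hx
    rw [hcd] at hx
    rcases List.mem_cons.mp hx with rfl | hx
    · exact le_refl _
    · have := hpw.2.1
      rw [hcd] at this
      exact (List.pairwise_cons.mp this).1 x hx
  have hlen' : (l.take k).length = k := by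
    rw [List.length_take]; exact min_eq_left hkl.le
  have htakemap : ((l.take k).map fun x => max (c - x) 0).sum
      = k * c - (l.take k).sum := by
    have h0 : ((l.take k).map fun x => max (c - x) 0)
        = (l.take k).map fun x => c - x := by
      apply List.map_congr_left
      intro x hx
      exact max_eq_left (sub_nonneg.mpr (htake x hx))
    rw [h0, list_sum_map_sub (l.take k) (fun _ => c) (fun x => x),
      list_sum_map_const, hlen']
    simp
  have hdropmap : ((l.drop k).map fun x => max (c - x) 0).sum = 0 := by
    apply List.sum_eq_zero
    intro x hx
    simp only [List.mem_map] at hx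
    obtain ⟨y, hy, rfl⟩ := hx
    exact max_eq_right (sub_nonpos.mpr (hdrople y hy))
  have hT : Tfn M c = k * c - (l.take k).sum := by
    rw [Tfn_sort, ← hl, ← List.take_append_drop k l, List.map_append, List.sum_append,
      List.take_append_drop, htakemap, hdropmap, add_zero]
  unfold partialSum
  rw [← hl, hT]
  ring

lemma multiset_eq_of_partialSum {M M' : Multiset ℚ}
    (hcard : Multiset.card M = Multiset.card M')
    (h : ∀ k ≤ Multiset.card M, partialSum M k = partialSum M' k) : M = M' := by
  have hsort : M.sort (· ≤ ·) = M'.sort (· ≤ ·) := by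
    apply List.ext_getElem
    · rw [Multiset.length_sort, Multiset.length_sort, hcard]
    · intro n h1 h2
      have hn : n < Multiset.card M := by rwa [Multiset.length_sort] at h1
      have e1 := List.sum_take_succ _ n h1
      have e2 := List.sum_take_succ _ n h2
      have p1 := h n hn.le
      have p2 := h (n + 1) hn
      unfold partialSum at p1 p2
      rw [p1] at e1
      rw [p2] at e1
      linarith [e1, e2]
  calc M = ↑(M.sort (· ≤ ·)) := (Multiset.sort_eq _ _).symm
    _ = ↑(M'.sort (· ≤ ·)) := by rw [hsort]
    _ = M' := Multiset.sort_eq _ _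


section Orbit

variable {s ν : ℕ} [NeZero s]

lemma orb_mem_iff' {r r' : ZMod s} :
    r' ∈ orb s ν r ↔ ∃ t ≤ s, ((ν : ZMod s)) ^ t * r = r' := by
  unfold orb
  simp only [Finset.mem_image, Finset.mem_range, Nat.lt_succ_iff]

lemma pow_mul_mem_orb (hw : IsUnit ((ν : ZMod s))) (r : ZMod s) (a : ℕ) :
    (ν : ZMod s) ^ a * r ∈ orb s ν r := by
  obtain ⟨u, hu⟩ := hw
  have hos : orderOf u ≤ s := by
    have h1 : orderOf u ∣ Fintype.card (ZMod s)ˣ := orderOf_dvd_card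
    have h2 : Fintype.card (ZMod s)ˣ = Nat.totient s := ZMod.card_units_eq_totient s
    have h3 : 0 < Nat.totient s := Nat.totient_pos.mpr (Nat.pos_of_ne_zero (NeZero.ne s))
    exact le_trans (Nat.le_of_dvd h3 (h2 ▸ h1)) (Nat.totient_le s)
  have hopos : 0 < orderOf u := orderOf_pos u
  have hpow : (ν : ZMod s) ^ a = (ν : ZMod s) ^ (a % orderOf u) := by
    rw [← hu]
    rw [← Units.val_pow_eq_pow_val, ← Units.val_pow_eq_pow_val, pow_mod_orderOf]
  rw [orb_mem_iff']
  exact ⟨a % orderOf u, le_trans (le_of_lt (Nat.mod_lt a hopos)) hos, by rw [← hpow]⟩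

lemma exists_pow_inv (hw : IsUnit ((ν : ZMod s))) (a : ℕ) :
    ∃ b : ℕ, (ν : ZMod s) ^ b * (ν : ZMod s) ^ a = 1 := by
  obtain ⟨u, hu⟩ := hw
  refine ⟨a * (orderOf u - 1), ?_⟩
  rw [← pow_add]
  have : a * (orderOf u - 1) + a = a * orderOf u := by
    have h : orderOf u - 1 + 1 = orderOf u := Nat.succ_pred_eq_of_pos (orderOf_pos u)
    calc a * (orderOf u - 1) + a = a * (orderOf u - 1 + 1) := by ring
      _ = a * orderOf u := by rw [h]
  rw [this, ← hu, ← Units.val_pow_eq_pow_val, pow_mul', pow_orderOf_eq_one, one_pow,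
    Units.val_one]

lemma mem_orb_self (hw : IsUnit ((ν : ZMod s))) (r : ZMod s) : r ∈ orb s ν r := by
  simpa using pow_mul_mem_orb hw r 0

lemma orb_mem_symm (hw : IsUnit ((ν : ZMod s))) {r r' : ZMod s}
    (h : r' ∈ orb s ν r) : r ∈ orb s ν r' := by
  rw [orb_mem_iff'] at h
  obtain ⟨t, _, rfl⟩ := h
  obtain ⟨b, hb⟩ := exists_pow_inv hw t
  have hm := pow_mul_mem_orb hw ((ν : ZMod s) ^ t * r) b
  rwa [← mul_assoc, hb, one_mul] at hm

lemma orb_eq_of_mem (hw : IsUnit ((ν : ZMod s))) {r r' : ZMod s}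
    (h : r' ∈ orb s ν r) : orb s ν r' = orb s ν r := by
  have h' := orb_mem_symm hw h
  rw [orb_mem_iff'] at h h'
  obtain ⟨t, _, rfl⟩ := h
  ext x
  rw [orb_mem_iff', orb_mem_iff']
  constructor
  · rintro ⟨a, _, rfl⟩
    rw [← mul_assoc, ← pow_add]
    exact (orb_mem_iff'.mp (pow_mul_mem_orb hw r (a + t)))
  · rintro ⟨a, _, rfl⟩
    obtain ⟨b, hb⟩ := exists_pow_inv hw t
    have hkey : (ν : ZMod s) ^ (a + b) * ((ν : ZMod s) ^ t * r) = (ν : ZMod s) ^ a * r := by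
      rw [← mul_assoc, ← pow_add]
      have hbt : (ν : ZMod s) ^ (a + b + t) = (ν : ZMod s) ^ a := by
        rw [pow_add, pow_add, mul_assoc, hb, mul_one]
      rw [hbt]
    rw [← hkey]
    exact (orb_mem_iff'.mp (pow_mul_mem_orb hw _ (a + b)))

lemma orb_mem_comm (hw : IsUnit ((ν : ZMod s))) (r r' : ZMod s) :
    r' ∈ orb s ν r ↔ r ∈ orb s ν r' :=
  ⟨orb_mem_symm hw, orb_mem_symm hw⟩

lemma orb_card_pos (hw : IsUnit ((ν : ZMod s))) (r : ZMod s) : 0 < (orb s ν r).card :=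
  Finset.card_pos.mpr ⟨r, mem_orb_self hw r⟩

lemma lam_eq_of_mem_orb (hw : IsUnit ((ν : ZMod s))) {r r' : ZMod s}
    (h : r' ∈ orb s ν r) : lam s ν r' = lam s ν r := by
  unfold lam
  rw [orb_eq_of_mem hw h]

lemma sum_univ_eq_sum_orb (hw : IsUnit ((ν : ZMod s))) (F : ZMod s → ℚ) :
    ∑ r : ZMod s, F r
      = ∑ r : ZMod s, (∑ r' ∈ orb s ν r, F r') / ((orb s ν r).card : ℚ) := by
  have key : ∀ r : ZMod s,
      (∑ r' ∈ orb s ν r, F r') / ((orb s ν r).card : ℚ)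
        = ∑ r' : ZMod s, if r' ∈ orb s ν r then F r' / ((orb s ν r').card : ℚ) else 0 := by
    intro r
    rw [Finset.sum_ite_mem, Finset.univ_inter, Finset.sum_div]
    apply Finset.sum_congr rfl
    intro r' hr'
    rw [orb_eq_of_mem hw hr']
  rw [Finset.sum_congr rfl (fun r _ => key r), Finset.sum_comm]
  apply Finset.sum_congr rfl
  intro r' _
  rw [Finset.sum_congr rfl (fun r _ => if_congr (orb_mem_comm hw r r') rfl rfl),
    Finset.sum_ite_mem, Finset.univ_inter, Finset.sum_const, nsmul_eq_mul]
  have hcz : ((orb s ν r').card : ℚ) ≠ 0 := Nat.cast_ne_zero.mpr (orb_card_pos hw r').ne'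
  field_simp

lemma grouped_nonpos (hw : IsUnit ((ν : ZMod s))) (F : ZMod s → ℚ)
    (h : ∀ r : ZMod s, ∑ r' ∈ orb s ν r, F r' ≤ 0) :
    ∑ r : ZMod s, F r ≤ 0 := by
  rw [sum_univ_eq_sum_orb hw]
  apply Finset.sum_nonpos
  intro r _
  exact div_nonpos_iff.mpr (Or.inr ⟨h r, by positivity⟩)

lemma grouped_eq_zero (hw : IsUnit ((ν : ZMod s))) (F : ZMod s → ℚ)
    (h : ∀ r : ZMod s, ∑ r' ∈ orb s ν r, F r' ≤ 0)
    (heq : ∑ r : ZMod s, F r = 0) :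
    ∀ r : ZMod s, ∑ r' ∈ orb s ν r, F r' = 0 := by
  rw [sum_univ_eq_sum_orb hw] at heq
  have hnp : ∀ r ∈ (Finset.univ : Finset (ZMod s)),
      (∑ r' ∈ orb s ν r, F r') / ((orb s ν r).card : ℚ) ≤ 0 := by
    intro r _
    exact div_nonpos_iff.mpr (Or.inr ⟨h r, by positivity⟩)
  have := (Finset.sum_eq_zero_iff_of_nonpos hnp).mp heq
  intro r
  have hr := this r (Finset.mem_univ r)
  rcases div_eq_zero_iff.mp hr with h0 | h0
  · exact h0
  · exact absurd h0 (Nat.cast_ne_zero.mpr (orb_card_pos hw r).ne')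

end Orbit
section Decomp

lemma range_coe (n : ℕ) :
    ((Multiset.range n : Multiset ℕ) : Multiset ℚ)
      = (Multiset.range n).map (Nat.cast : ℕ → ℚ) := by
  show Multiset.bind _ _ = _
  simp [Multiset.pure_def, Multiset.bind_singleton]

lemma msum_range_nat (f : ℕ → ℕ) (n : ℕ) :
    ((Multiset.range n).map f).sum = ∑ i ∈ Finset.range n, f i := by
  rw [Finset.sum, Finset.range_val]

lemma msum_range (f : ℕ → ℚ) (n : ℕ) :
    ((Multiset.range n).map f).sum = ∑ i ∈ Finset.range n, f i := by
  rw [Finset.sum, Finset.range_val]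

lemma HS_map_sum (φ : ℚ → ℚ) (d₁ d₂ s ν : ℕ) :
    ((HSslopes d₁ d₂ s ν).map φ).sum
      = ∑ r ∈ Finset.range s,
          ((∑ m ∈ Finset.range d₁, φ (((m : ℚ) + 1 - lam s ν (r : ZMod s)) / d₁))
            + ∑ m ∈ Finset.range d₂, φ (((m : ℚ) + lam s ν (r : ZMod s)) / d₂)) := by
  unfold HSslopes
  rw [Multiset.map_bind, Multiset.sum_bind, ← msum_range]
  congr 1
  apply Multiset.map_congr rfl
  intro r _
  rw [Multiset.map_add, Multiset.sum_add, range_coe, range_coe, Multiset.map_map, Multiset.map_map,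
    Multiset.map_map, Multiset.map_map, msum_range, msum_range]
  rfl

lemma HS_card (d₁ d₂ s ν : ℕ) :
    Multiset.card (HSslopes d₁ d₂ s ν) = s * (d₁ + d₂) := by
  simp only [HSslopes, Multiset.card_bind, range_coe, Function.comp_def, Multiset.card_add,
    Multiset.card_map, Multiset.map_const', Multiset.sum_replicate, Multiset.card_range,
    smul_eq_mul]

lemma sum_range_cast (n : ℕ) : ∑ m ∈ Finset.range n, (m : ℚ) = n * (n - 1) / 2 := by
  induction n with
  | zero => simp
  | succ n ih =>
    rw [Finset.sum_range_succ, ih]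
    push_cast
    ring

lemma HS_sum (d₁ d₂ s ν : ℕ) (hd₁ : 1 ≤ d₁) (hd₂ : 1 ≤ d₂) :
    (HSslopes d₁ d₂ s ν).sum = (s : ℚ) * ((d₁ : ℚ) + (d₂ : ℚ)) / 2 := by
  have h := HS_map_sum id d₁ d₂ s ν
  rw [Multiset.map_id] at h
  rw [h]
  have hd₁' : (d₁ : ℚ) ≠ 0 := Nat.cast_ne_zero.mpr (by omega)
  have hd₂' : (d₂ : ℚ) ≠ 0 := Nat.cast_ne_zero.mpr (by omega)
  have key : ∀ r ∈ Finset.range s,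
      ((∑ m ∈ Finset.range d₁, id (((m : ℚ) + 1 - lam s ν (r : ZMod s)) / d₁))
        + ∑ m ∈ Finset.range d₂, id (((m : ℚ) + lam s ν (r : ZMod s)) / d₂))
      = ((d₁ : ℚ) + (d₂ : ℚ)) / 2 := by
    intro r _
    set L := lam s ν (r : ZMod s)
    simp only [id_eq]
    rw [← Finset.sum_div, ← Finset.sum_div]
    have c1 : ∀ m ∈ Finset.range d₁, ((m : ℚ) + 1 - L) = (m : ℚ) + (1 - L) :=
      fun m _ => by ring
    have c2 : ∀ m ∈ Finset.range d₂, ((m : ℚ) + L) = (m : ℚ) + L := fun m _ => rfl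
    rw [Finset.sum_congr rfl c1, Finset.sum_add_distrib, Finset.sum_const,
      Finset.card_range, nsmul_eq_mul, sum_range_cast,
      Finset.sum_add_distrib, Finset.sum_const, Finset.card_range, nsmul_eq_mul,
      sum_range_cast]
    field_simp
    ring
  rw [Finset.sum_congr rfl key, Finset.sum_const, Finset.card_range, nsmul_eq_mul]
  ring

lemma lam_one {s : ℕ} [NeZero s] (r : ZMod s) :
    lam s 1 r = (r.val : ℚ) / s := by
  have horb : orb s 1 r = {r} := by
    unfold orb
    rw [Nat.cast_one]
    have h : (fun t => (1 : ZMod s) ^ t * r) = fun _ => r := by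
      funext t; rw [one_pow, one_mul]
    rw [h, Finset.image_const ⟨0, Finset.mem_range.mpr (Nat.succ_pos s)⟩]
  unfold lam
  rw [horb]
  simp

lemma lam_card_sum {s ν : ℕ} [NeZero s] (hw : IsUnit ((ν : ZMod s))) (r : ZMod s) :
    ((orb s ν r).card : ℚ) * lam s ν r = ∑ j ∈ orb s ν r, ((j.val : ℚ) / s) := by
  unfold lam
  have hs : (s : ℚ) ≠ 0 := Nat.cast_ne_zero.mpr (NeZero.ne s)
  have hc : ((orb s ν r).card : ℚ) ≠ 0 := Nat.cast_ne_zero.mpr (orb_card_pos hw r).ne'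
  rw [← Finset.sum_div]
  generalize (∑ j ∈ orb s ν r, ((j.val : ℕ) : ℚ)) = S
  field_simp

lemma max_sum_le {α : Type*} (O : Finset α) (u : α → ℚ) :
    max (∑ x ∈ O, u x) 0 ≤ ∑ x ∈ O, max (u x) 0 := by
  apply max_le
  · exact Finset.sum_le_sum fun x _ => le_max_left _ _
  · exact Finset.sum_nonneg fun x _ => le_max_right _ _

lemma quad_sum_identity {α : Type*} (O : Finset α) (f : α → ℚ) (μ C B A : ℚ)
    (hμ : ∑ x ∈ O, f x = (O.card : ℚ) * μ) :
    ∑ x ∈ O, ((C * μ ^ 2 + B * μ + A) - (C * (f x) ^ 2 + B * f x + A))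
      = - C * ∑ x ∈ O, (f x - μ) ^ 2 := by
  have e1 : ∑ x ∈ O, (f x - μ) ^ 2
      = (∑ x ∈ O, (f x) ^ 2) - 2 * μ * (∑ x ∈ O, f x) + (O.card : ℚ) * μ ^ 2 := by
    have h : ∀ x ∈ O, (f x - μ) ^ 2 = (f x) ^ 2 - (2 * μ) * f x + μ ^ 2 := fun x _ => by ring
    rw [Finset.sum_congr rfl h, Finset.sum_add_distrib, Finset.sum_sub_distrib,
      ← Finset.mul_sum, Finset.sum_const, nsmul_eq_mul]
  have e2 : ∑ x ∈ O, ((C * μ ^ 2 + B * μ + A) - (C * (f x) ^ 2 + B * f x + A))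
      = (O.card : ℚ) * (C * μ ^ 2 + B * μ + A)
        - (C * (∑ x ∈ O, (f x) ^ 2) + B * (∑ x ∈ O, f x) + (O.card : ℚ) * A) := by
    rw [Finset.sum_sub_distrib, Finset.sum_const, nsmul_eq_mul]
    congr 1
    rw [Finset.sum_add_distrib, Finset.sum_add_distrib, ← Finset.mul_sum, ← Finset.mul_sum,
      Finset.sum_const, nsmul_eq_mul]
  rw [e2, e1, hμ]
  ring

end Decomp
section HPeq

lemma bind_eq_map_range (n d : ℕ) (e : ℕ × ℕ → ℕ) (v : ℕ → ℚ)
    (himg : Finset.image e (Finset.range n ×ˢ Finset.range d) = Finset.range (n * d))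
    (hinj : Set.InjOn e ↑(Finset.range n ×ˢ Finset.range d)) :
    (Multiset.range n).bind (fun r => (Multiset.range d).map (fun m => v (e (r, m))))
      = (Multiset.range (n * d)).map v := by
  have h1 : (Multiset.range n).bind (fun r => (Multiset.range d).map (fun m => v (e (r, m))))
      = ((Finset.range n ×ˢ Finset.range d).val).map (fun p => v (e p)) := by
    rw [Finset.product_val, Finset.range_val, Finset.range_val]
    rw [show ((Multiset.range n) ×ˢ (Multiset.range d) : Multiset (ℕ × ℕ))
        = (Multiset.range n).bind (fun a => (Multiset.range d).map (Prod.mk a)) from rfl,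
      Multiset.map_bind]
    apply Multiset.bind_congr
    intro r _
    rw [Multiset.map_map]
    rfl
  have h2 : ((Finset.range n ×ˢ Finset.range d).val).map (fun p => v (e p))
      = (((Finset.range n ×ˢ Finset.range d).val).map e).map v := by
    rw [Multiset.map_map]
    rfl
  rw [h1, h2, ← Finset.image_val_of_injOn hinj, himg, Finset.range_val]

lemma mul_cancel_key (s : ℕ) (hs : 1 ≤ s) :
    ∀ a b x y : ℕ, x < s → a * s + x = b * s + y → a < b → False := by
  intro a b x y hx heq hab
  have h1' : a * s + s ≤ b * s := by
    calc a * s + s = (a + 1) * s := (Nat.succ_mul a s).symm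
      _ ≤ b * s := Nat.mul_le_mul_right s hab
  generalize hA : a * s = A at h1' heq
  generalize hB : b * s = B at h1' heq
  omega

lemma e1_img (s d : ℕ) (hs : 1 ≤ s) :
    Finset.image (fun p : ℕ × ℕ => p.2 * s + (s - 1 - p.1)) (Finset.range s ×ˢ Finset.range d)
      = Finset.range (s * d) := by
  ext j
  simp only [Finset.mem_image, Finset.mem_product, Finset.mem_range]
  constructor
  · rintro ⟨⟨r, m⟩, ⟨hr, hm⟩, rfl⟩
    simp only
    calc m * s + (s - 1 - r) < m * s + s := Nat.add_lt_add_left (by omega) (m * s)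
      _ = (m + 1) * s := (Nat.succ_mul m s).symm
      _ ≤ d * s := Nat.mul_le_mul_right s hm
      _ = s * d := Nat.mul_comm d s
  · intro hj
    have hmod : j % s < s := Nat.mod_lt j hs
    have hdm := Nat.div_add_mod j s
    have hjd : j / s < d := by
      by_contra h
      push_neg at h
      have h2 : s * d ≤ s * (j / s) := Nat.mul_le_mul_left s h
      have h3 : s * (j / s) ≤ j := Nat.le.intro hdm
      exact absurd hj (not_lt.mpr (le_trans h2 h3))
    refine ⟨(s - 1 - j % s, j / s), ⟨by omega, hjd⟩, ?_⟩
    simp only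
    have h1 : s - 1 - (s - 1 - j % s) = j % s := by omega
    rw [h1, Nat.mul_comm (j / s) s]
    omega

lemma e1_inj (s d : ℕ) (hs : 1 ≤ s) :
    Set.InjOn (fun p : ℕ × ℕ => p.2 * s + (s - 1 - p.1))
      ↑(Finset.range s ×ˢ Finset.range d) := by
  rintro ⟨r, m⟩ h1 ⟨r', m'⟩ h2 he
  simp only [Finset.coe_product, Set.mem_prod, Finset.mem_coe, Finset.mem_range] at h1 h2
  simp only at he
  have hm : m = m' := by
    rcases Nat.lt_trichotomy m m' with h | h | h
    · exact absurd (mul_cancel_key s hs m m' _ _ (by omega) he h) (not_false)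
    · exact h
    · exact absurd (mul_cancel_key s hs m' m _ _ (by omega) he.symm h) (not_false)
  subst hm
  have : s - 1 - r = s - 1 - r' := by omega
  have : r = r' := by omega
  simp [this]

lemma e2_img (s d : ℕ) (hs : 1 ≤ s) :
    Finset.image (fun p : ℕ × ℕ => p.1 + p.2 * s) (Finset.range s ×ˢ Finset.range d)
      = Finset.range (s * d) := by
  ext j
  simp only [Finset.mem_image, Finset.mem_product, Finset.mem_range]
  constructor
  · rintro ⟨⟨r, m⟩, ⟨hr, hm⟩, rfl⟩
    simp only
    calc r + m * s < s + m * s := by omega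
      _ = (m + 1) * s := by rw [Nat.succ_mul, Nat.add_comm]
      _ ≤ d * s := Nat.mul_le_mul_right s hm
      _ = s * d := Nat.mul_comm d s
  · intro hj
    have hmod : j % s < s := Nat.mod_lt j hs
    have hdm := Nat.div_add_mod j s
    have hjd : j / s < d := by
      by_contra h
      push_neg at h
      have h2 : s * d ≤ s * (j / s) := Nat.mul_le_mul_left s h
      have h3 : s * (j / s) ≤ j := Nat.le.intro hdm
      exact absurd hj (not_lt.mpr (le_trans h2 h3))
    refine ⟨(j % s, j / s), ⟨hmod, hjd⟩, ?_⟩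
    simp only
    rw [Nat.mul_comm (j / s) s]
    omega

lemma e2_inj (s d : ℕ) (hs : 1 ≤ s) :
    Set.InjOn (fun p : ℕ × ℕ => p.1 + p.2 * s)
      ↑(Finset.range s ×ˢ Finset.range d) := by
  rintro ⟨r, m⟩ h1 ⟨r', m'⟩ h2 he
  simp only [Finset.coe_product, Set.mem_prod, Finset.mem_coe, Finset.mem_range] at h1 h2
  simp only at he
  have hm : m = m' := by
    rcases Nat.lt_trichotomy m m' with h | h | h
    · exact absurd (mul_cancel_key s hs m m' r r' h1.1 (by omega) h) (not_false)
    · exact h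
    · exact absurd (mul_cancel_key s hs m' m r' r h2.1 (by omega) h) (not_false)
  subst hm
  have : r = r' := by omega
  simp [this]

end HPeq
section HP1

lemma bind_eq_map_range' (n d : ℕ) (e : ℕ × ℕ → ℕ) (v : ℕ → ℚ) (f : ℕ → ℕ → ℚ)
    (hf : ∀ r < n, ∀ m < d, f r m = v (e (r, m)))
    (himg : Finset.image e (Finset.range n ×ˢ Finset.range d) = Finset.range (n * d))
    (hinj : Set.InjOn e ↑(Finset.range n ×ˢ Finset.range d)) :
    (Multiset.range n).bind (fun r => (Multiset.range d).map (f r))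
      = (Multiset.range (n * d)).map v := by
  rw [← bind_eq_map_range n d e v himg hinj]
  apply Multiset.bind_congr
  intro r hr
  apply Multiset.map_congr rfl
  intro m hm
  exact hf r (Multiset.mem_range.mp hr) m (Multiset.mem_range.mp hm)

lemma HS1_eq_HP (s d₁ d₂ : ℕ) (hs : 1 ≤ s) (hd₁ : 1 ≤ d₁) (hd₂ : 1 ≤ d₂) :
    HSslopes d₁ d₂ s 1 = HPslopes s d₁ d₂ := by
  haveI : NeZero s := ⟨by omega⟩
  have hsQ : (s : ℚ) ≠ 0 := Nat.cast_ne_zero.mpr (by omega)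
  have hd₁Q : (d₁ : ℚ) ≠ 0 := Nat.cast_ne_zero.mpr (by omega)
  have hd₂Q : (d₂ : ℚ) ≠ 0 := Nat.cast_ne_zero.mpr (by omega)
  have hsd₁ : 1 ≤ s * d₁ := Nat.one_le_iff_ne_zero.mpr (Nat.mul_ne_zero (by omega) (by omega))
  have hsd₂ : 1 ≤ s * d₂ := Nat.one_le_iff_ne_zero.mpr (Nat.mul_ne_zero (by omega) (by omega))
  -- normalize HSslopes into two binds of ℕ-indexed maps
  have hHS : HSslopes d₁ d₂ s 1
      = (Multiset.range s).bind (fun r => (Multiset.range d₁).map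
            (fun m : ℕ => ((m : ℚ) + 1 - (r : ℚ) / s) / d₁))
        + (Multiset.range s).bind (fun r => (Multiset.range d₂).map
            (fun m : ℕ => ((m : ℚ) + (r : ℚ) / s) / d₂)) := by
    unfold HSslopes
    rw [← Multiset.bind_add]
    apply Multiset.bind_congr
    intro r hr
    have hrs : r < s := Multiset.mem_range.mp hr
    have hval : lam s 1 ((r : ℕ) : ZMod s) = (r : ℚ) / s := by
      rw [lam_one, ZMod.val_cast_of_lt hrs]
    congr 1
    · rw [range_coe, Multiset.map_map]
      apply Multiset.map_congr rfl
      intro m _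
      show ((m : ℚ) + 1 - lam s 1 ((r : ℕ) : ZMod s)) / (d₁ : ℚ) = _
      rw [hval]
    · rw [range_coe, Multiset.map_map]
      apply Multiset.map_congr rfl
      intro m _
      show ((m : ℚ) + lam s 1 ((r : ℕ) : ZMod s)) / (d₂ : ℚ) = _
      rw [hval]
  have hb1 : (Multiset.range s).bind (fun r => (Multiset.range d₁).map
        (fun m : ℕ => ((m : ℚ) + 1 - (r : ℚ) / s) / d₁))
      = (Multiset.range (s * d₁)).map (fun j : ℕ => ((j : ℚ) + 1) / ((s : ℚ) * d₁)) := by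
    apply bind_eq_map_range' s d₁ (fun p => p.2 * s + (s - 1 - p.1)) _ _ _
      (e1_img s d₁ hs) (e1_inj s d₁ hs)
    intro r hr m _
    have h1 : ((m * s + (s - 1 - r) : ℕ) : ℚ) = (m : ℚ) * s + ((s : ℚ) - 1 - r) := by
      have h2 : ((s - 1 - r : ℕ) : ℚ) = (s : ℚ) - 1 - r := by
        rw [Nat.cast_sub (by omega), Nat.cast_sub (by omega)]
        push_cast
        ring
      push_cast [h2]
      ring
    show ((m : ℚ) + 1 - (r : ℚ) / s) / d₁ = ((((m * s + (s - 1 - r) : ℕ)) : ℚ) + 1) / ((s : ℚ) * d₁)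
    rw [h1]
    field_simp
    ring
  have hb2 : (Multiset.range s).bind (fun r => (Multiset.range d₂).map
        (fun m : ℕ => ((m : ℚ) + (r : ℚ) / s) / d₂))
      = (Multiset.range (s * d₂)).map (fun j : ℕ => (j : ℚ) / ((s : ℚ) * d₂)) := by
    apply bind_eq_map_range' s d₂ (fun p => p.1 + p.2 * s) _ _ _
      (e2_img s d₂ hs) (e2_inj s d₂ hs)
    intro r _ m _
    show ((m : ℚ) + (r : ℚ) / s) / d₂ = (((r + m * s : ℕ)) : ℚ) / ((s : ℚ) * d₂)
    push_cast
    field_simp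
    ring
  -- peel endpoints
  have hpeel1 : (Multiset.range (s * d₁)).map (fun j : ℕ => ((j : ℚ) + 1) / ((s : ℚ) * d₁))
      = (1 : ℚ) ::ₘ (Multiset.range (s * d₁ - 1)).map (fun j : ℕ => ((j : ℚ) + 1) / ((s : ℚ) * d₁)) := by
    have h : s * d₁ = (s * d₁ - 1) + 1 := by omega
    conv_lhs => rw [h]
    rw [Multiset.range_succ, Multiset.map_cons]
    congr 1
    have h2 : ((s * d₁ - 1 : ℕ) : ℚ) + 1 = (s : ℚ) * d₁ := by
      rw [Nat.cast_sub hsd₁]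
      push_cast
      ring
    rw [h2, div_self (mul_ne_zero hsQ hd₁Q)]
  have hrange_succ : ∀ k : ℕ, Multiset.range (k + 1)
      = (0 : ℕ) ::ₘ (Multiset.range k).map Nat.succ := by
    intro k
    show ((List.range (k + 1) : List ℕ) : Multiset ℕ) = _
    rw [List.range_succ_eq_map, ← Multiset.cons_coe]
    congr 1
  have hpeel2 : (Multiset.range (s * d₂)).map (fun j : ℕ => (j : ℚ) / ((s : ℚ) * d₂))
      = (0 : ℚ) ::ₘ (Multiset.range (s * d₂ - 1)).map
          (fun j : ℕ => ((j : ℚ) + 1) / ((s : ℚ) * d₂)) := by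
    have h : s * d₂ = (s * d₂ - 1) + 1 := by omega
    conv_lhs => rw [h]
    rw [hrange_succ, Multiset.map_cons, Multiset.map_map]
    congr 1
    · norm_num
    · apply Multiset.map_congr rfl
      intro j _
      show ((Nat.succ j : ℕ) : ℚ) / ((s : ℚ) * d₂) = _
      push_cast
      ring
  rw [hHS, hb1, hb2, hpeel1, hpeel2]
  unfold HPslopes
  rw [range_coe, range_coe, Multiset.map_map, Multiset.map_map]
  simp only [Function.comp_def, Multiset.insert_eq_cons, Multiset.cons_add,
    Multiset.add_cons, Multiset.singleton_add]

end HP1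
section Compare

lemma sum_range_zmod {s : ℕ} [NeZero s] (h : ZMod s → ℚ) :
    ∑ r ∈ Finset.range s, h ((r : ℕ) : ZMod s) = ∑ r : ZMod s, h r := by
  apply Finset.sum_nbij' (i := fun r : ℕ => ((r : ℕ) : ZMod s)) (j := fun w : ZMod s => w.val)
  · intro a _
    exact Finset.mem_univ _
  · intro a _
    exact Finset.mem_range.mpr (ZMod.val_lt _)
  · intro a ha
    exact ZMod.val_cast_of_lt (Finset.mem_range.mp ha)
  · intro a _
    exact ZMod.natCast_rightInverse a
  · intro a _
    rfl

lemma key_T {s : ℕ} (ν d₁ d₂ : ℕ) [NeZero s] (hw : IsUnit ((ν : ZMod s))) (c : ℚ)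
    (r : ZMod s) :
    ((orb s ν r).card : ℚ) *
        ((∑ m ∈ Finset.range d₁, max (c - ((m : ℚ) + 1 - lam s ν r) / d₁) 0)
          + ∑ m ∈ Finset.range d₂, max (c - ((m : ℚ) + lam s ν r) / d₂) 0)
      ≤ ∑ r' ∈ orb s ν r,
          ((∑ m ∈ Finset.range d₁, max (c - ((m : ℚ) + 1 - (r'.val : ℚ) / s) / d₁) 0)
            + ∑ m ∈ Finset.range d₂, max (c - ((m : ℚ) + (r'.val : ℚ) / s) / d₂) 0) := by
  have hcard := lam_card_sum hw r
  rw [Finset.sum_add_distrib, mul_add]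
  apply add_le_add
  · rw [Finset.mul_sum, Finset.sum_comm]
    apply Finset.sum_le_sum
    intro m _
    have hsum : ∑ r' ∈ orb s ν r, (c - ((m : ℚ) + 1 - (r'.val : ℚ) / s) / d₁)
        = ((orb s ν r).card : ℚ) * (c - ((m : ℚ) + 1 - lam s ν r) / d₁) := by
      have e : ∀ r' ∈ orb s ν r, (c - ((m : ℚ) + 1 - (r'.val : ℚ) / s) / d₁)
          = (c - ((m : ℚ) + 1) / d₁) + (1 / d₁) * ((r'.val : ℚ) / s) := fun r' _ => by ring
      rw [Finset.sum_congr rfl e, Finset.sum_add_distrib, Finset.sum_const, ← Finset.mul_sum,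
        ← hcard, nsmul_eq_mul]
      ring
    calc ((orb s ν r).card : ℚ) * max (c - ((m : ℚ) + 1 - lam s ν r) / d₁) 0
        = max (((orb s ν r).card : ℚ) * (c - ((m : ℚ) + 1 - lam s ν r) / d₁)) 0 := by
          rw [mul_max_of_nonneg _ _ (by positivity : (0:ℚ) ≤ ((orb s ν r).card : ℚ)), mul_zero]
      _ = max (∑ r' ∈ orb s ν r, (c - ((m : ℚ) + 1 - (r'.val : ℚ) / s) / d₁)) 0 := by
          rw [hsum]
      _ ≤ ∑ r' ∈ orb s ν r, max (c - ((m : ℚ) + 1 - (r'.val : ℚ) / s) / d₁) 0 :=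
          max_sum_le _ _
  · rw [Finset.mul_sum, Finset.sum_comm]
    apply Finset.sum_le_sum
    intro m _
    have hsum : ∑ r' ∈ orb s ν r, (c - ((m : ℚ) + (r'.val : ℚ) / s) / d₂)
        = ((orb s ν r).card : ℚ) * (c - ((m : ℚ) + lam s ν r) / d₂) := by
      have e : ∀ r' ∈ orb s ν r, (c - ((m : ℚ) + (r'.val : ℚ) / s) / d₂)
          = (c - (m : ℚ) / d₂) + (-(1 / d₂)) * ((r'.val : ℚ) / s) := fun r' _ => by ring
      rw [Finset.sum_congr rfl e, Finset.sum_add_distrib, Finset.sum_const, ← Finset.mul_sum,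
        ← hcard, nsmul_eq_mul]
      ring
    calc ((orb s ν r).card : ℚ) * max (c - ((m : ℚ) + lam s ν r) / d₂) 0
        = max (((orb s ν r).card : ℚ) * (c - ((m : ℚ) + lam s ν r) / d₂)) 0 := by
          rw [mul_max_of_nonneg _ _ (by positivity : (0:ℚ) ≤ ((orb s ν r).card : ℚ)), mul_zero]
      _ = max (∑ r' ∈ orb s ν r, (c - ((m : ℚ) + (r'.val : ℚ) / s) / d₂)) 0 := by
          rw [hsum]
      _ ≤ ∑ r' ∈ orb s ν r, max (c - ((m : ℚ) + (r'.val : ℚ) / s) / d₂) 0 :=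
          max_sum_le _ _

lemma T_le {s : ℕ} (ν d₁ d₂ : ℕ) [NeZero s] (hw : IsUnit ((ν : ZMod s))) (c : ℚ) :
    Tfn (HSslopes d₁ d₂ s ν) c ≤ Tfn (HSslopes d₁ d₂ s 1) c := by
  have eA : Tfn (HSslopes d₁ d₂ s ν) c
      = ∑ w : ZMod s, ((∑ m ∈ Finset.range d₁, max (c - ((m : ℚ) + 1 - lam s ν w) / d₁) 0)
          + ∑ m ∈ Finset.range d₂, max (c - ((m : ℚ) + lam s ν w) / d₂) 0) :=
    (HS_map_sum (fun x => max (c - x) 0) d₁ d₂ s ν).trans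
      (sum_range_zmod (fun w => (∑ m ∈ Finset.range d₁, max (c - ((m : ℚ) + 1 - lam s ν w) / d₁) 0)
          + ∑ m ∈ Finset.range d₂, max (c - ((m : ℚ) + lam s ν w) / d₂) 0))
  have eB : Tfn (HSslopes d₁ d₂ s 1) c
      = ∑ w : ZMod s, ((∑ m ∈ Finset.range d₁, max (c - ((m : ℚ) + 1 - (w.val : ℚ) / s) / d₁) 0)
          + ∑ m ∈ Finset.range d₂, max (c - ((m : ℚ) + (w.val : ℚ) / s) / d₂) 0) := by
    refine ((HS_map_sum (fun x => max (c - x) 0) d₁ d₂ s 1).trans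
      (sum_range_zmod (fun w => (∑ m ∈ Finset.range d₁, max (c - ((m : ℚ) + 1 - lam s 1 w) / d₁) 0)
          + ∑ m ∈ Finset.range d₂, max (c - ((m : ℚ) + lam s 1 w) / d₂) 0))).trans ?_
    apply Finset.sum_congr rfl
    intro w _
    rw [lam_one]
  rw [eA, eB, ← sub_nonpos, ← Finset.sum_sub_distrib]
  apply grouped_nonpos hw
  intro r
  rw [Finset.sum_sub_distrib, sub_nonpos]
  have hl : ∀ r' ∈ orb s ν r,
      ((∑ m ∈ Finset.range d₁, max (c - ((m : ℚ) + 1 - lam s ν r') / d₁) 0)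
        + ∑ m ∈ Finset.range d₂, max (c - ((m : ℚ) + lam s ν r') / d₂) 0)
      = ((∑ m ∈ Finset.range d₁, max (c - ((m : ℚ) + 1 - lam s ν r) / d₁) 0)
        + ∑ m ∈ Finset.range d₂, max (c - ((m : ℚ) + lam s ν r) / d₂) 0) := by
    intro r' hr'
    rw [lam_eq_of_mem_orb hw hr']
  rw [Finset.sum_congr rfl hl, Finset.sum_const, nsmul_eq_mul]
  exact key_T ν d₁ d₂ hw c r

lemma fam_quad {α : Type*} (O : Finset α) (f : α → ℚ) (μ : ℚ)
    (hμ : ∑ x ∈ O, f x = (O.card : ℚ) * μ) (a ε D : ℚ) :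
    ∑ x ∈ O, (((a + ε * μ) / D) ^ 2 - ((a + ε * f x) / D) ^ 2)
      = -(ε ^ 2 / D ^ 2) * ∑ x ∈ O, (f x - μ) ^ 2 := by
  have h : ∀ x ∈ O, ((a + ε * μ) / D) ^ 2 - ((a + ε * f x) / D) ^ 2
      = ((ε ^ 2 / D ^ 2) * μ ^ 2 + (2 * a * ε / D ^ 2) * μ + a ^ 2 / D ^ 2)
        - ((ε ^ 2 / D ^ 2) * (f x) ^ 2 + (2 * a * ε / D ^ 2) * (f x) + a ^ 2 / D ^ 2) :=
    fun x _ => by ring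
  rw [Finset.sum_congr rfl h, quad_sum_identity O f μ _ _ _ hμ]

lemma SQ_orbit {α : Type*} (O : Finset α) (f : α → ℚ) (μ : ℚ)
    (hμ : ∑ x ∈ O, f x = (O.card : ℚ) * μ) (d₁ d₂ : ℕ) (hd₁ : 1 ≤ d₁) (hd₂ : 1 ≤ d₂) :
    ∑ x ∈ O,
        (((∑ m ∈ Finset.range d₁, (((m : ℚ) + 1 - μ) / d₁) ^ 2)
            + ∑ m ∈ Finset.range d₂, (((m : ℚ) + μ) / d₂) ^ 2)
          - ((∑ m ∈ Finset.range d₁, (((m : ℚ) + 1 - f x) / d₁) ^ 2)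
            + ∑ m ∈ Finset.range d₂, (((m : ℚ) + f x) / d₂) ^ 2))
      = -((1 : ℚ) / d₁ + 1 / d₂) * ∑ x ∈ O, (f x - μ) ^ 2 := by
  have hd₁Q : (d₁ : ℚ) ≠ 0 := Nat.cast_ne_zero.mpr (by omega)
  have hd₂Q : (d₂ : ℚ) ≠ 0 := Nat.cast_ne_zero.mpr (by omega)
  have step : ∀ x ∈ O,
      (((∑ m ∈ Finset.range d₁, (((m : ℚ) + 1 - μ) / d₁) ^ 2)
          + ∑ m ∈ Finset.range d₂, (((m : ℚ) + μ) / d₂) ^ 2)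
        - ((∑ m ∈ Finset.range d₁, (((m : ℚ) + 1 - f x) / d₁) ^ 2)
          + ∑ m ∈ Finset.range d₂, (((m : ℚ) + f x) / d₂) ^ 2))
      = (∑ m ∈ Finset.range d₁,
            (((((m : ℚ) + 1) + (-1) * μ) / d₁) ^ 2 - ((((m : ℚ) + 1) + (-1) * f x) / d₁) ^ 2))
        + ∑ m ∈ Finset.range d₂,
            ((((m : ℚ) + 1 * μ) / d₂) ^ 2 - (((m : ℚ) + 1 * f x) / d₂) ^ 2) := by
    intro x _
    rw [Finset.sum_sub_distrib, Finset.sum_sub_distrib]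
    have c1 : ∀ m ∈ Finset.range d₁,
        ((((m : ℚ) + 1) + (-1) * μ) / d₁) ^ 2 = (((m : ℚ) + 1 - μ) / d₁) ^ 2 :=
      fun m _ => by ring
    have c2 : ∀ m ∈ Finset.range d₁,
        ((((m : ℚ) + 1) + (-1) * f x) / d₁) ^ 2 = (((m : ℚ) + 1 - f x) / d₁) ^ 2 :=
      fun m _ => by ring
    have c3 : ∀ m ∈ Finset.range d₂,
        (((m : ℚ) + 1 * μ) / d₂) ^ 2 = (((m : ℚ) + μ) / d₂) ^ 2 := fun m _ => by ring
    have c4 : ∀ m ∈ Finset.range d₂,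
        (((m : ℚ) + 1 * f x) / d₂) ^ 2 = (((m : ℚ) + f x) / d₂) ^ 2 := fun m _ => by ring
    rw [Finset.sum_congr rfl c1, Finset.sum_congr rfl c2, Finset.sum_congr rfl c3,
      Finset.sum_congr rfl c4]
    ring
  rw [Finset.sum_congr rfl step, Finset.sum_add_distrib]
  have swap1 : ∑ x ∈ O, ∑ m ∈ Finset.range d₁,
        (((((m : ℚ) + 1) + (-1) * μ) / d₁) ^ 2 - ((((m : ℚ) + 1) + (-1) * f x) / d₁) ^ 2)
      = ∑ m ∈ Finset.range d₁, ∑ x ∈ O,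
        (((((m : ℚ) + 1) + (-1) * μ) / d₁) ^ 2 - ((((m : ℚ) + 1) + (-1) * f x) / d₁) ^ 2) :=
    Finset.sum_comm
  have swap2 : ∑ x ∈ O, ∑ m ∈ Finset.range d₂,
        ((((m : ℚ) + 1 * μ) / d₂) ^ 2 - (((m : ℚ) + 1 * f x) / d₂) ^ 2)
      = ∑ m ∈ Finset.range d₂, ∑ x ∈ O,
        ((((m : ℚ) + 1 * μ) / d₂) ^ 2 - (((m : ℚ) + 1 * f x) / d₂) ^ 2) :=
    Finset.sum_comm
  rw [swap1, swap2]
  have f1 : ∀ m ∈ Finset.range d₁,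
      ∑ x ∈ O, (((((m : ℚ) + 1) + (-1) * μ) / d₁) ^ 2 - ((((m : ℚ) + 1) + (-1) * f x) / d₁) ^ 2)
        = -(((-1 : ℚ)) ^ 2 / (d₁ : ℚ) ^ 2) * ∑ x ∈ O, (f x - μ) ^ 2 :=
    fun m _ => fam_quad O f μ hμ ((m : ℚ) + 1) (-1) d₁
  have f2 : ∀ m ∈ Finset.range d₂,
      ∑ x ∈ O, ((((m : ℚ) + 1 * μ) / d₂) ^ 2 - (((m : ℚ) + 1 * f x) / d₂) ^ 2)
        = -((1 : ℚ) ^ 2 / (d₂ : ℚ) ^ 2) * ∑ x ∈ O, (f x - μ) ^ 2 :=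
    fun m _ => fam_quad O f μ hμ (m : ℚ) 1 d₂
  rw [Finset.sum_congr rfl f1, Finset.sum_congr rfl f2, Finset.sum_const, Finset.sum_const,
    Finset.card_range, Finset.card_range, nsmul_eq_mul, nsmul_eq_mul]
  field_simp
  ring

end Compare
section Final

lemma HS_congr (d₁ d₂ s : ℕ) {ν ν' : ℕ} (h : ((ν : ℕ) : ZMod s) = ((ν' : ℕ) : ZMod s)) :
    HSslopes d₁ d₂ s ν = HSslopes d₁ d₂ s ν' := by
  unfold HSslopes lam orb
  rw [h]

noncomputable def SQfun (d₁ d₂ : ℕ) (L : ℚ) : ℚ :=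
  (∑ m ∈ Finset.range d₁, (((m : ℚ) + 1 - L) / d₁) ^ 2)
    + ∑ m ∈ Finset.range d₂, (((m : ℚ) + L) / d₂) ^ 2

lemma SQ_diff_orbit {s : ℕ} (ν d₁ d₂ : ℕ) [NeZero s] (hw : IsUnit ((ν : ZMod s)))
    (hd₁ : 1 ≤ d₁) (hd₂ : 1 ≤ d₂) (r : ZMod s) :
    ∑ r' ∈ orb s ν r, (SQfun d₁ d₂ (lam s ν r') - SQfun d₁ d₂ ((r'.val : ℚ) / s))
      = -((1 : ℚ) / d₁ + 1 / d₂)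
          * ∑ r' ∈ orb s ν r, (((r'.val : ℚ) / s) - lam s ν r) ^ 2 := by
  have hcongr : ∀ r' ∈ orb s ν r,
      SQfun d₁ d₂ (lam s ν r') - SQfun d₁ d₂ ((r'.val : ℚ) / s)
        = SQfun d₁ d₂ (lam s ν r) - SQfun d₁ d₂ ((r'.val : ℚ) / s) :=
    fun r' h => by rw [lam_eq_of_mem_orb hw h]
  rw [Finset.sum_congr rfl hcongr]
  exact SQ_orbit (orb s ν r) (fun r' => (r'.val : ℚ) / s) (lam s ν r)
    (lam_card_sum hw r).symm d₁ d₂ hd₁ hd₂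

end Final

end RK14Helpers

/-- **Remark 1.4.**  Let `p` be a prime, `s ≥ 1` with `p ∤ s`, `d₁, d₂ ≥ 1`.  Then
(i) the Hodge–Stickelberger polygon lies on or above the Hodge polygon:
`HS(k) ≥ HP(k)` for `0 ≤ k ≤ s(d₁+d₂)`;
(ii) they share endpoints: `HS(0) = HP(0) = 0` and
`HS(s(d₁+d₂)) = HP(s(d₁+d₂)) = s(d₁+d₂)/2`;
(iii) `HS(k) = HP(k)` for all `k` iff `p ≡ 1 (mod s)`. -/
theorem stmt_13 (p s d₁ d₂ : ℕ) [Fact p.Prime]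
    (hs : 1 ≤ s) (hps : ¬ p ∣ s) (hd₁ : 1 ≤ d₁) (hd₂ : 1 ≤ d₂) :
    (∀ k ≤ s * (d₁ + d₂),
        partialSum (HPslopes s d₁ d₂) k ≤ partialSum (HSslopes d₁ d₂ s (p % s)) k)
    ∧ (partialSum (HSslopes d₁ d₂ s (p % s)) 0 = 0 ∧ partialSum (HPslopes s d₁ d₂) 0 = 0)
    ∧ (partialSum (HSslopes d₁ d₂ s (p % s)) (s * (d₁ + d₂)) = ((s * (d₁ + d₂) : ℕ) : ℚ) / 2
        ∧ partialSum (HPslopes s d₁ d₂) (s * (d₁ + d₂)) = ((s * (d₁ + d₂) : ℕ) : ℚ) / 2)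
    ∧ ((∀ k ≤ s * (d₁ + d₂),
          partialSum (HSslopes d₁ d₂ s (p % s)) k = partialSum (HPslopes s d₁ d₂) k)
        ↔ p ≡ 1 [MOD s]) := by
  haveI : NeZero s := ⟨by omega⟩
  have hp : Nat.Prime p := Fact.out
  have hco : Nat.Coprime p s := (Nat.Prime.coprime_iff_not_dvd hp).mpr hps
  have hcast : (((p % s : ℕ)) : ZMod s) = ((p : ℕ) : ZMod s) := ZMod.natCast_mod p s
  have hw : IsUnit (((p % s : ℕ) : ZMod s)) := by
    rw [hcast]
    exact (ZMod.isUnit_iff_coprime p s).mpr hco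
  have hsQ : (s : ℚ) ≠ 0 := Nat.cast_ne_zero.mpr (by omega)
  have hHP : HPslopes s d₁ d₂ = HSslopes d₁ d₂ s 1 := (HS1_eq_HP s d₁ d₂ hs hd₁ hd₂).symm
  have hcardA : Multiset.card (HSslopes d₁ d₂ s (p % s)) = s * (d₁ + d₂) :=
    HS_card d₁ d₂ s (p % s)
  have hcardHP : Multiset.card (HPslopes s d₁ d₂) = s * (d₁ + d₂) := by
    rw [hHP]; exact HS_card d₁ d₂ s 1
  have hsumA : (HSslopes d₁ d₂ s (p % s)).sum = ((s * (d₁ + d₂) : ℕ) : ℚ) / 2 := by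
    rw [HS_sum d₁ d₂ s (p % s) hd₁ hd₂]; push_cast; ring
  have hsumHP : (HPslopes s d₁ d₂).sum = ((s * (d₁ + d₂) : ℕ) : ℚ) / 2 := by
    rw [hHP, HS_sum d₁ d₂ s 1 hd₁ hd₂]; push_cast; ring
  have hendA : partialSum (HSslopes d₁ d₂ s (p % s)) (s * (d₁ + d₂))
      = ((s * (d₁ + d₂) : ℕ) : ℚ) / 2 := by
    have h := partialSum_card (HSslopes d₁ d₂ s (p % s))
    rw [hcardA] at h
    rw [h, hsumA]
  have hendHP : partialSum (HPslopes s d₁ d₂) (s * (d₁ + d₂))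
      = ((s * (d₁ + d₂) : ℕ) : ℚ) / 2 := by
    have h := partialSum_card (HPslopes s d₁ d₂)
    rw [hcardHP] at h
    rw [h, hsumHP]
  have part1 : ∀ k ≤ s * (d₁ + d₂),
      partialSum (HPslopes s d₁ d₂) k ≤ partialSum (HSslopes d₁ d₂ s (p % s)) k := by
    intro k hk
    rcases eq_or_lt_of_le hk with heq | hlt
    · rw [heq, hendA, hendHP]
    · obtain ⟨c, hc⟩ := partialSum_attain (HPslopes s d₁ d₂) k (by rw [hcardHP]; exact hlt)
      have h1 : Tfn (HSslopes d₁ d₂ s (p % s)) c ≤ Tfn (HPslopes s d₁ d₂) c := by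
        rw [hHP]
        exact T_le (p % s) d₁ d₂ hw c
      have h2 := le_partialSum (HSslopes d₁ d₂ s (p % s)) k (by rw [hcardA]; exact hk) c
      rw [hc]
      linarith
  refine ⟨part1, ⟨partialSum_zero _, partialSum_zero _⟩, ⟨hendA, hendHP⟩, ?_, ?_⟩
  · -- equality for all k implies p ≡ 1 [MOD s]
    intro hall
    have hAB : HSslopes d₁ d₂ s (p % s) = HPslopes s d₁ d₂ :=
      multiset_eq_of_partialSum (by rw [hcardA, hcardHP])
        (fun k hk => hall k (by rwa [hcardA] at hk))
    have hsq : (((HSslopes d₁ d₂ s (p % s)).map (fun x => x ^ 2)).sum)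
        = ((HSslopes d₁ d₂ s 1).map (fun x => x ^ 2)).sum := by
      rw [hAB, hHP]
    have eA : (((HSslopes d₁ d₂ s (p % s)).map (fun x => x ^ 2)).sum)
        = ∑ w : ZMod s, SQfun d₁ d₂ (lam s (p % s) w) :=
      (HS_map_sum (fun x => x ^ 2) d₁ d₂ s (p % s)).trans
        (sum_range_zmod (fun w => SQfun d₁ d₂ (lam s (p % s) w)))
    have eB : (((HSslopes d₁ d₂ s 1).map (fun x => x ^ 2)).sum)
        = ∑ w : ZMod s, SQfun d₁ d₂ ((w.val : ℚ) / s) := by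
      refine ((HS_map_sum (fun x => x ^ 2) d₁ d₂ s 1).trans
        (sum_range_zmod (fun w => SQfun d₁ d₂ (lam s 1 w)))).trans ?_
      apply Finset.sum_congr rfl
      intro w _
      rw [lam_one]
    have hsum0 : ∑ w : ZMod s,
        (SQfun d₁ d₂ (lam s (p % s) w) - SQfun d₁ d₂ ((w.val : ℚ) / s)) = 0 := by
      rw [Finset.sum_sub_distrib, ← eA, ← eB, hsq, sub_self]
    have hper : ∀ r : ZMod s, ∑ r' ∈ orb s (p % s) r,
        (SQfun d₁ d₂ (lam s (p % s) r') - SQfun d₁ d₂ ((r'.val : ℚ) / s)) ≤ 0 := by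
      intro r
      rw [SQ_diff_orbit (p % s) d₁ d₂ hw hd₁ hd₂ r, neg_mul]
      have hC : (0 : ℚ) ≤ 1 / d₁ + 1 / d₂ := by positivity
      have hS : (0 : ℚ) ≤ ∑ r' ∈ orb s (p % s) r,
          (((r'.val : ℚ) / s) - lam s (p % s) r) ^ 2 :=
        Finset.sum_nonneg fun _ _ => sq_nonneg _
      exact neg_nonpos.mpr (mul_nonneg hC hS)
    have h1 := grouped_eq_zero hw _ hper hsum0 1
    rw [SQ_diff_orbit (p % s) d₁ d₂ hw hd₁ hd₂ 1, neg_mul, neg_eq_zero] at h1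
    have hCpos : (0 : ℚ) < 1 / d₁ + 1 / d₂ := by
      have h₁ : (0 : ℚ) < (d₁ : ℚ) := Nat.cast_pos.mpr (by omega)
      have h₂ : (0 : ℚ) < (d₂ : ℚ) := Nat.cast_pos.mpr (by omega)
      positivity
    have hS0 : ∑ r' ∈ orb s (p % s) 1,
        (((r'.val : ℚ) / s) - lam s (p % s) 1) ^ 2 = 0 := by
      rcases mul_eq_zero.mp h1 with h | h
      · exact absurd h hCpos.ne'
      · exact h
    have hterm := (Finset.sum_eq_zero_iff_of_nonneg
      (fun r' _ => sq_nonneg (((r'.val : ℚ) / s) - lam s (p % s) 1))).mp hS0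
    have hval : ∀ r' ∈ orb s (p % s) 1, ((r'.val : ℚ) / s) = lam s (p % s) 1 := by
      intro r' hr'
      have := hterm r' hr'
      have := pow_eq_zero_iff (n := 2) (by norm_num) |>.mp this
      linarith [sub_eq_zero.mp this]
    have hmem1 : (1 : ZMod s) ∈ orb s (p % s) 1 := mem_orb_self hw 1
    have hmemw : ((p % s : ℕ) : ZMod s) * 1 ∈ orb s (p % s) 1 := by
      have := pow_mul_mem_orb hw (1 : ZMod s) 1
      rwa [pow_one] at this
    have hq : (((((p % s : ℕ) : ZMod s) * 1).val : ℚ) / s) = (((1 : ZMod s).val : ℚ) / s) := by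
      rw [hval _ hmemw, hval _ hmem1]
    have hvals : ((((p % s : ℕ) : ZMod s) * 1).val : ℚ) = (((1 : ZMod s).val : ℚ)) := by
      have := congrArg (· * (s : ℚ)) hq
      simpa [div_mul_cancel₀ _ hsQ] using this
    have hvaln : (((p % s : ℕ) : ZMod s) * 1).val = (1 : ZMod s).val := by
      exact_mod_cast hvals
    have heq1 : ((p % s : ℕ) : ZMod s) = (1 : ZMod s) := by
      have h2 : ((p % s : ℕ) : ZMod s) * 1 = (1 : ZMod s) := by
        calc ((p % s : ℕ) : ZMod s) * 1
            = ((((p % s : ℕ) : ZMod s) * 1).val : ZMod s) :=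
              (ZMod.natCast_rightInverse _).symm
          _ = (((1 : ZMod s).val : ZMod s)) := by rw [hvaln]
          _ = 1 := ZMod.natCast_rightInverse _
      rwa [mul_one] at h2
    have hfinal : ((p : ℕ) : ZMod s) = ((1 : ℕ) : ZMod s) := by
      rw [← hcast, heq1, Nat.cast_one]
    exact (ZMod.natCast_eq_natCast_iff p 1 s).mp hfinal
  · -- p ≡ 1 [MOD s] implies equality for all k
    intro hmod k hk
    have hone : (((p % s : ℕ)) : ZMod s) = ((1 : ℕ) : ZMod s) := by
      rw [hcast]
      exact (ZMod.natCast_eq_natCast_iff p 1 s).mpr hmod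
    rw [HS_congr d₁ d₂ s hone, ← hHP]


end
end

section
/- Let p be a prime, a ≥ 1, q = p^a, and s ≥ 1 with s | q−1. Let 0 ≤ r ≤ s−1, let O be the orbit of r under the permutation of {0,…,s−1} given by multiplication by p modulo s, and let ℓ = |O|. Then ℓ divides a, and the sum of the base-p digits of the integer (q−1)r/s satisfies s_p((q−1)r/s) = a(p−1)·λ, where λ = (Σ_{j∈O} j)/(sℓ). Equivalently, λ = s_p((q−1)r/s)/(a(p−1)). -/
open scoped Classical

noncomputable section

namespace Stick

lemma list_sum_map_range (f : ℕ → ℕ) (n : ℕ) :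
    ((List.range n).map f).sum = ∑ i ∈ Finset.range n, f i := by
  induction n with
  | zero => simp
  | succ n ih => rw [List.range_succ, Finset.sum_range_succ]; simp [ih]

lemma ofDigits_eq_zero_sum (p : ℕ) (hp : 1 < p) :
    ∀ L : List ℕ, Nat.ofDigits p L = 0 → L.sum = 0 := by
  intro L
  induction L with
  | nil => simp
  | cons d L ih =>
    intro h
    rw [Nat.ofDigits_cons] at h
    have hd : d = 0 := by omega
    have hL : p * Nat.ofDigits p L = 0 := by omega
    have : Nat.ofDigits p L = 0 := by
      rcases Nat.mul_eq_zero.mp hL with h | h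
      · omega
      · exact h
    simp [hd, ih this]

lemma sum_digits_ofDigits (p : ℕ) (hp : 1 < p) :
    ∀ L : List ℕ, (∀ d ∈ L, d < p) → (Nat.digits p (Nat.ofDigits p L)).sum = L.sum := by
  intro L
  induction L with
  | nil => simp
  | cons d L ih =>
    intro hlt
    rw [Nat.ofDigits_cons]
    by_cases h0 : d + p * Nat.ofDigits p L = 0
    · have hd : d = 0 := by omega
      have hL : Nat.ofDigits p L = 0 := by
        rcases Nat.mul_eq_zero.mp (show p * Nat.ofDigits p L = 0 by omega) with h | h
        · omega
        · exact h
      rw [h0]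
      simp [hd, ofDigits_eq_zero_sum p hp L hL]
    · rw [Nat.digits_def' hp (Nat.pos_of_ne_zero h0)]
      have hdp : d < p := hlt d (by simp)
      have hmod : (d + p * Nat.ofDigits p L) % p = d := by
        rw [Nat.add_mul_mod_self_left, Nat.mod_eq_of_lt hdp]
      have hdiv : (d + p * Nat.ofDigits p L) / p = Nat.ofDigits p L := by
        rw [Nat.add_mul_div_left _ _ (by omega), Nat.div_eq_of_lt hdp, Nat.zero_add]
      rw [List.sum_cons, hmod, hdiv, ih (fun x hx => hlt x (by simp [hx])), List.sum_cons]

def rr (p s r i : ℕ) : ℕ := p ^ i * r % s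

def cc (p s r i : ℕ) : ℕ := p * rr p s r i / s

def ff (p s r : ℕ) : ℕ → ℕ
  | 0 => 0
  | (a + 1) => p * ff p s r a + cc p s r a

variable {p s r : ℕ}

lemma key1 (i : ℕ) : p * rr p s r i = s * cc p s r i + rr p s r (i + 1) := by
  have h1 : rr p s r (i + 1) = (p * rr p s r i) % s := by
    unfold rr
    rw [Nat.mul_mod_mod, pow_succ, mul_comm (p ^ i) p, mul_assoc]
  rw [h1, cc]
  exact (Nat.div_add_mod (p * rr p s r i) s).symm

lemma rr_lt (hs : 0 < s) (i : ℕ) : rr p s r i < s := Nat.mod_lt _ hs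

lemma cc_lt (hs : 0 < s) (hp : 0 < p) (i : ℕ) : cc p s r i < p := by
  have h1 : p * rr p s r i < p * s := Nat.mul_lt_mul_of_le_of_lt (le_refl p) (rr_lt hs i) hp
  rw [cc]
  exact (Nat.div_lt_iff_lt_mul hs).mpr (by omega)

lemma ff_eq (hs : 0 < s) (hr : r < s) (a : ℕ) :
    s * ff p s r a + rr p s r a = p ^ a * r := by
  induction a with
  | zero => simp [ff, rr, Nat.mod_eq_of_lt hr]
  | succ a ih =>
    have h1 := key1 (p := p) (s := s) (r := r) a
    calc s * ff p s r (a + 1) + rr p s r (a + 1)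
        = s * (p * ff p s r a) + (s * cc p s r a + rr p s r (a + 1)) := by rw [ff]; ring
      _ = s * (p * ff p s r a) + p * rr p s r a := by rw [← h1]
      _ = p * (s * ff p s r a + rr p s r a) := by ring
      _ = p * (p ^ a * r) := by rw [ih]
      _ = p ^ (a + 1) * r := by ring

lemma ff_ofDigits (a : ℕ) :
    ff p s r a = Nat.ofDigits p (((List.range a).map (cc p s r)).reverse) := by
  induction a with
  | zero => simp [ff]
  | succ a ih =>
    rw [List.range_succ, List.map_append, List.reverse_append]
    simp only [List.map_cons, List.map_nil, List.reverse_cons, List.reverse_nil,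
      List.nil_append, List.singleton_append]
    rw [Nat.ofDigits_cons, ff, ih]
    ring

lemma ff_digits_sum (hp : 1 < p) (hs : 0 < s) (a : ℕ) :
    (Nat.digits p (ff p s r a)).sum = ∑ i ∈ Finset.range a, cc p s r i := by
  rw [ff_ofDigits]
  rw [sum_digits_ofDigits p hp _ ?_]
  · rw [List.sum_reverse, list_sum_map_range]
  · intro d hd
    rw [List.mem_reverse, List.mem_map] at hd
    obtain ⟨i, _, rfl⟩ := hd
    exact cc_lt hs (by omega) i

end Stick


/-- **Stickelberger digit-sum formula (equation (3.5)).**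
Let `p` be a prime, `q = p^a`, `s ≥ 1` with `s ∣ q-1`, and `0 ≤ r ≤ s-1`.  Let `O` be the
orbit of `r` under multiplication by `p` on `ℤ/s` and `ℓ = |O|`.  Then `ℓ ∣ a` and the sum
of the base-`p` digits of `(q-1)r/s` satisfies `s_p((q-1)r/s) = a(p-1)·λ`, where
`λ = (∑_{j∈O} j)/(sℓ)`. -/
theorem stmt_14 (p a s r : ℕ) [Fact p.Prime]
    (ha : 1 ≤ a) (hs : 1 ≤ s) (hsq : s ∣ p ^ a - 1) (hr : r ≤ s - 1) :
    (orb s p (r : ZMod s)).card ∣ a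
    ∧ ((Nat.digits p ((p ^ a - 1) * r / s)).sum : ℚ)
        = (a : ℚ) * ((p : ℚ) - 1) * lam s p (r : ZMod s) := by
  have hp : 1 < p := (Fact.out : p.Prime).one_lt
  have hs0 : 0 < s := hs
  have hrs : r < s := by omega
  haveI : NeZero s := ⟨by omega⟩
  set R : ZMod s := (r : ZMod s) with hR
  set x : ℕ → ZMod s := fun t => (p : ZMod s) ^ t * R with hx
  have hpale : 1 ≤ p ^ a := Nat.one_le_pow _ _ (by omega)
  have hmod1 : p ^ a ≡ 1 [MOD s] := ((Nat.modEq_iff_dvd' hpale).mpr hsq).symm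
  have hpa1 : (p : ZMod s) ^ a = 1 := by
    have := (ZMod.natCast_eq_natCast_iff (p ^ a) 1 s).mpr hmod1
    push_cast at this
    exact this
  have hxa : x a = R := by simp [hx, hpa1]
  have hP : ∃ t, 0 < t ∧ x t = R := ⟨a, by omega, hxa⟩
  set d := Nat.find hP with hdd
  obtain ⟨hd0, hxd⟩ : 0 < d ∧ x d = R := Nat.find_spec hP
  have hmin : ∀ t, 0 < t → t < d → x t ≠ R := by
    intro t h1 h2 h3
    exact Nat.find_min hP h2 ⟨h1, h3⟩
  have hstep : ∀ n, x (n + d) = x n := by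
    intro n
    have hxd' : (p : ZMod s) ^ d * R = R := hxd
    have : x (n + d) = (p : ZMod s) ^ n * ((p : ZMod s) ^ d * R) := by
      simp only [hx, pow_add, mul_assoc]
    rw [this, hxd']
  have hper : ∀ i k, x (i + d * k) = x i := by
    intro i k
    induction k with
    | zero => simp
    | succ k ih =>
      have h : i + d * (k + 1) = (i + d * k) + d := by ring
      rw [h, hstep, ih]
  have hmodd : ∀ t, x t = x (t % d) := by
    intro t
    conv_lhs => rw [← Nat.mod_add_div t d]
    exact hper (t % d) (t / d)
  have hdvd : d ∣ a := by
    rcases Nat.eq_zero_or_pos (a % d) with h | h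
    · exact Nat.dvd_of_mod_eq_zero h
    · exfalso
      exact hmin (a % d) h (Nat.mod_lt _ hd0) (by rw [← hmodd a, hxa])
  -- p is a unit
  have hunit : IsUnit (p : ZMod s) := by
    apply IsUnit.of_mul_eq_one ((p : ZMod s) ^ (a - 1))
    rw [← pow_succ', show a - 1 + 1 = a from by omega, hpa1]
  have hkeyinj : ∀ i j, i < j → j < d → x i ≠ x j := by
    intro i j hij hjd heq
    have hpow : (p : ZMod s) ^ j = (p : ZMod s) ^ i * (p : ZMod s) ^ (j - i) := by
      rw [← pow_add]; congr 1; omega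
    have h2 : (p : ZMod s) ^ i * R = (p : ZMod s) ^ i * ((p : ZMod s) ^ (j - i) * R) := by
      calc (p : ZMod s) ^ i * R = x j := heq
        _ = (p : ZMod s) ^ i * ((p : ZMod s) ^ (j - i) * R) := by
            simp only [hx, hpow, mul_assoc]
    have h3 : x (j - i) = R := ((hunit.pow i).mul_left_cancel h2).symm
    exact hmin (j - i) (by omega) (by omega) h3
  have hinj : Set.InjOn x (Finset.range d) := by
    intro i hi j hj hij
    simp only [Finset.coe_range, Set.mem_Iio] at hi hj
    rcases lt_trichotomy i j with h | h | h
    · exact absurd hij (hkeyinj i j h hj)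
    · exact h
    · exact absurd hij.symm (hkeyinj j i h hi)
  have hdles : d ≤ s := by
    have h1 : (Finset.range d).card ≤ (Finset.univ : Finset (ZMod s)).card :=
      Finset.card_le_card_of_injOn x (fun _ _ => Finset.mem_univ _) hinj
    rwa [Finset.card_range, Finset.card_univ, ZMod.card] at h1
  have horb : orb s p R = Finset.image x (Finset.range d) := by
    have : orb s p R = Finset.image x (Finset.range (s + 1)) := rfl
    rw [this]
    ext y
    simp only [Finset.mem_image, Finset.mem_range]
    constructor
    · rintro ⟨t, _, rfl⟩
      exact ⟨t % d, Nat.mod_lt _ hd0, (hmodd t).symm⟩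
    · rintro ⟨t, htd, rfl⟩
      exact ⟨t, by omega, rfl⟩
  have hcard : (orb s p R).card = d := by
    rw [horb, Finset.card_image_of_injOn hinj, Finset.card_range]
  refine ⟨hcard ▸ hdvd, ?_⟩
  -- digit sums
  have hrrval : ∀ i, Stick.rr p s r i = (x i).val := by
    intro i
    have h1 : ((p ^ i * r : ℕ) : ZMod s) = x i := by push_cast [hx, hR]; ring
    rw [← h1, ZMod.val_natCast]
    rfl
  have hrra : Stick.rr p s r a = r := by
    rw [hrrval, hxa, hR, ZMod.val_natCast, Nat.mod_eq_of_lt hrs]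
  have hrr0 : Stick.rr p s r 0 = r := by
    rw [Stick.rr, pow_zero, one_mul, Nat.mod_eq_of_lt hrs]
  have hN : (p ^ a - 1) * r / s = Stick.ff p s r a := by
    have hffeq := Stick.ff_eq (p := p) (r := r) hs0 hrs a
    have h2 : p ^ a * r = s * Stick.ff p s r a + r := by rw [← hffeq, hrra]
    have h1 : (p ^ a - 1) * r = s * Stick.ff p s r a := by
      rw [Nat.sub_mul, one_mul]
      exact Nat.sub_eq_of_eq_add h2
    rw [h1, Nat.mul_div_cancel_left _ hs0]
  have hdig : ((Nat.digits p ((p ^ a - 1) * r / s)).sum : ℚ)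
      = ∑ i ∈ Finset.range a, (Stick.cc p s r i : ℚ) := by
    rw [hN, Stick.ff_digits_sum hp hs0 a]
    push_cast
    ring
  -- s * Σ cc = (p-1) * Σ rr  in ℚ
  have hq1 : ∀ i, (s : ℚ) * Stick.cc p s r i
      = (p : ℚ) * Stick.rr p s r i - Stick.rr p s r (i + 1) := by
    intro i
    have := Stick.key1 (p := p) (s := s) (r := r) i
    have h2 : (p : ℚ) * (Stick.rr p s r i : ℚ)
        = (s : ℚ) * (Stick.cc p s r i : ℚ) + (Stick.rr p s r (i + 1) : ℚ) := by
      exact_mod_cast this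
    linarith
  have hScc : (s : ℚ) * ∑ i ∈ Finset.range a, (Stick.cc p s r i : ℚ)
      = ((p : ℚ) - 1) * ∑ i ∈ Finset.range a, (Stick.rr p s r i : ℚ) := by
    rw [Finset.mul_sum]
    have h1 : ∑ i ∈ Finset.range a, (s : ℚ) * Stick.cc p s r i
        = ∑ i ∈ Finset.range a, ((p : ℚ) * Stick.rr p s r i - Stick.rr p s r (i + 1)) :=
      Finset.sum_congr rfl (fun i _ => hq1 i)
    rw [h1, Finset.sum_sub_distrib, ← Finset.mul_sum]
    have h2 := Finset.sum_range_succ (fun i => (Stick.rr p s r i : ℚ)) a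
    have h3 := Finset.sum_range_succ' (fun i => (Stick.rr p s r i : ℚ)) a
    have h4 : (Stick.rr p s r a : ℚ) = (Stick.rr p s r 0 : ℚ) := by rw [hrra, hrr0]
    have h5 : ∑ i ∈ Finset.range a, (Stick.rr p s r (i + 1) : ℚ)
        = ∑ i ∈ Finset.range a, (Stick.rr p s r i : ℚ) := by linarith
    rw [h5]; ring
  -- periodicity of rr
  set m := a / d with hm
  have hma : a = d * m := (Nat.mul_div_cancel' hdvd).symm
  have hrrper : ∀ i k, Stick.rr p s r (d * k + i) = Stick.rr p s r i := by
    intro i k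
    rw [hrrval, hrrval, Nat.add_comm, hper]
  have hpersum : ∀ k, ∑ i ∈ Finset.range (d * k), (Stick.rr p s r i : ℚ)
      = (k : ℚ) * ∑ i ∈ Finset.range d, (Stick.rr p s r i : ℚ) := by
    intro k
    induction k with
    | zero => simp
    | succ k ih =>
      have h : d * (k + 1) = d * k + d := by ring
      rw [h, Finset.sum_range_add, ih]
      have h2 : ∑ i ∈ Finset.range d, (Stick.rr p s r (d * k + i) : ℚ)
          = ∑ i ∈ Finset.range d, (Stick.rr p s r i : ℚ) :=
        Finset.sum_congr rfl (fun i _ => by rw [hrrper])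
      rw [h2]
      push_cast
      ring
  have hsum_orb : ∑ j ∈ orb s p R, ((j.val : ℚ))
      = ∑ i ∈ Finset.range d, (Stick.rr p s r i : ℚ) := by
    rw [horb, Finset.sum_image (fun i hi j hj hij => hinj (by simpa using hi) (by simpa using hj) hij)]
    exact Finset.sum_congr rfl (fun i _ => by rw [hrrval])
  have hlam : lam s p R = (∑ i ∈ Finset.range d, (Stick.rr p s r i : ℚ)) / ((s : ℚ) * d) := by
    rw [lam, hsum_orb, hcard]
  have hsne : (s : ℚ) ≠ 0 := by positivity
  have hdne : (d : ℚ) ≠ 0 := by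
    simp only [ne_eq, Nat.cast_eq_zero]; omega
  apply mul_left_cancel₀ hsne
  rw [hdig, hScc, hlam]
  have haq : (a : ℚ) = (d : ℚ) * (m : ℚ) := by exact_mod_cast congrArg (Nat.cast (R := ℚ)) hma
  rw [show Finset.range a = Finset.range (d * m) from by rw [← hma], hpersum m, haq]
  field_simp

end
end

section
/- Let n ≥ 1 and l ≥ 1 be integers and c ∈ ℚ. Let D_n(x,c) ∈ ℚ[x] be the degree-n Dickson polynomial. If c ≠ 0, then there exist infinitely many primes p such that for every 1 ≤ j ≤ l the map t ↦ D_n(t, c mod p) is a bijection of 𝔽_{p^j} (i.e. D_n(x,c) is a global permutation polynomial of level l) if and only if every prime factor Q of n satisfies Q > 2l+1. If c = 0 (so D_n(x,0) = x^n for n ≥ 1), the same holds if and only if every prime factor Q of n satisfies Q > l+1. (Here p ranges over primes at which c is integral and, when c ≠ 0, c mod p ≠ 0.) -/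
open scoped Classical

noncomputable section

open Polynomial

/-- `D_n(x,c)` permutes each of `𝔽_p, 𝔽_{p²}, …, 𝔽_{p^l}` (coefficients reduced mod `p`). -/
def DicksonPermutes (p : ℕ) (hp : p.Prime) (c : ℚ) (n l : ℕ) : Prop :=
  haveI : Fact p.Prime := ⟨hp⟩
  ∀ j : ℕ, 1 ≤ j → j ≤ l →
    Function.Bijective (fun t : GaloisField p j =>
      Polynomial.eval t
        (Polynomial.dickson 1 ((c.num : GaloisField p j) * ((c.den : GaloisField p j))⁻¹) n))



/-- evaluation of Dickson polynomial at `u+v` with parameter `u*v`. -/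
theorem dickson_eval_add {R : Type*} [CommRing R] (u v : R) :
    ∀ m : ℕ, (dickson 1 (u * v) m).eval (u + v) = u ^ m + v ^ m
  | 0 => by simp [dickson_zero]; norm_num
  | 1 => by simp [dickson_one]
  | m + 2 => by
    rw [dickson_add_two]
    simp only [eval_sub, eval_mul, eval_X, eval_C,
      dickson_eval_add u v (m + 1), dickson_eval_add u v m]
    ring

theorem dickson_eval_neg {R : Type*} [CommRing R] (a x : R) :
    ∀ m : ℕ, (dickson 1 a m).eval (-x) = (-1) ^ m * (dickson 1 a m).eval x
  | 0 => by simp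
  | 1 => by simp
  | m + 2 => by
    rw [dickson_add_two]
    simp only [eval_sub, eval_mul, eval_X, eval_C,
      dickson_eval_neg a x (m + 1), dickson_eval_neg a x m]
    ring

theorem dickson_one_zero_of_pos {R : Type*} [CommRing R] :
    ∀ m : ℕ, 1 ≤ m → (dickson 1 (0 : R) m) = X ^ m
  | 1, _ => by simp [dickson_one]
  | 2, _ => by simp [dickson_two, sq]
  | (m + 3), _ => by
    rw [dickson_add_two, dickson_one_zero_of_pos (m + 2) (by omega)]
    simp [pow_succ]; ring

/-- cancel `n`-th powers on `m`-th roots of unity when `gcd(n,m)=1`. -/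
theorem pow_cancel_of_coprime {K : Type*} [Monoid K] {n m : ℕ} (hn : 1 ≤ n)
    (h : Nat.Coprime n m) (hm : 1 ≤ m) {w₁ w₂ : K} (h1 : w₁ ^ m = 1) (h2 : w₂ ^ m = 1)
    (he : w₁ ^ n = w₂ ^ n) : w₁ = w₂ := by
  obtain ⟨k, t, hkt⟩ : ∃ k t, n * k = 1 + m * t := by
    rcases eq_or_lt_of_le hm with hm1 | hm1
    · subst hm1; exact ⟨1, n - 1, by omega⟩
    · obtain ⟨k, -, hk⟩ := Nat.exists_mul_mod_eq_one_of_coprime h hm1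
      exact ⟨k, n * k / m, by have := Nat.div_add_mod (n * k) m; omega⟩
  have key : ∀ w : K, w ^ m = 1 → w ^ (n * k) = w := by
    intro w hw
    rw [hkt, pow_add, pow_one, pow_mul, hw, one_pow, mul_one]
  calc w₁ = w₁ ^ (n * k) := (key w₁ h1).symm
    _ = (w₁ ^ n) ^ k := by rw [pow_mul]
    _ = (w₂ ^ n) ^ k := by rw [he]
    _ = w₂ ^ (n * k) := by rw [pow_mul]
    _ = w₂ := key w₂ h2

section FF
variable {F : Type*} [Field F] [Fintype F] (p r : ℕ) [Fact p.Prime] [CharP F p]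

local notation "K" => AlgebraicClosure F

set_option linter.unusedSectionVars false

theorem algmap_pow_card (hq : Fintype.card F = p ^ r) (x : F) :
    (algebraMap F K x) ^ p ^ r = algebraMap F K x := by
  rw [← map_pow, ← hq, FiniteField.pow_card]

/-- elements of the algebraic closure fixed by `x ↦ x^q` lie in the base field. -/
theorem mem_range_of_pow_card (hq : Fintype.card F = p ^ r) (x : K) (hx : x ^ p ^ r = x)
    (hr : r ≠ 0) : ∃ x₀ : F, algebraMap F K x₀ = x := by
  classical
  set q := p ^ r with hqdef
  have hq1 : 1 < q := Nat.one_lt_pow hr (Fact.out : p.Prime).one_lt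
  have hne : (X ^ q - X : K[X]) ≠ 0 := FiniteField.X_pow_card_sub_X_ne_zero K hq1
  set t : Finset K := (X ^ q - X : K[X]).roots.toFinset with ht
  have htcard : t.card ≤ q := by
    calc t.card ≤ Multiset.card (X ^ q - X : K[X]).roots := Multiset.toFinset_card_le _
      _ ≤ (X ^ q - X : K[X]).natDegree := Polynomial.card_roots' _
      _ = q := FiniteField.X_pow_card_sub_X_natDegree_eq K hq1
  set A : Finset K := Finset.univ.image (algebraMap F K) with hA
  have hAsub : A ⊆ t := by
    intro y hy
    simp only [hA, Finset.mem_image] at hy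
    obtain ⟨y₀, -, rfl⟩ := hy
    simp only [ht, Multiset.mem_toFinset, Polynomial.mem_roots hne, Polynomial.IsRoot,
      Polynomial.eval_sub, Polynomial.eval_pow, Polynomial.eval_X]
    rw [algmap_pow_card p r hq, sub_self]
  have hAcard : A.card = q := by
    rw [hA, Finset.card_image_of_injective _ (algebraMap F K).injective, Finset.card_univ, hq]
  have hxeq : t = A := (Finset.eq_of_subset_of_card_le hAsub (by omega)).symm
  have hxt : x ∈ t := by
    simp only [ht, Multiset.mem_toFinset, Polynomial.mem_roots hne, Polynomial.IsRoot,
      Polynomial.eval_sub, Polynomial.eval_pow, Polynomial.eval_X, hx, sub_self]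
  rw [hxeq] at hxt
  simp only [hA, Finset.mem_image] at hxt
  obtain ⟨x₀, -, h⟩ := hxt
  exact ⟨x₀, h⟩

/-- For `x ∈ F`, there is `u` in the algebraic closure with `u(x-u) = c` and `u^{q²} = u`. -/
theorem exists_split (hq : Fintype.card F = p ^ r) (c x : F) (hc : c ≠ 0) :
    ∃ u : K, u ≠ 0 ∧ u ^ (p ^ r) ^ 2 = u ∧
      u * (algebraMap F K x - u) = algebraMap F K c := by
  set f := algebraMap F K
  set g : K[X] := C 1 * X ^ 2 + C (-(f x)) * X + C (f c) with hg
  have hdeg : g.degree = 2 := Polynomial.degree_quadratic one_ne_zero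
  obtain ⟨u, hu⟩ := IsAlgClosed.exists_root g (by rw [hdeg]; exact two_ne_zero)
  have huq : u ^ 2 - f x * u + f c = 0 := by
    simp only [hg, Polynomial.IsRoot, Polynomial.eval_add, Polynomial.eval_mul,
      Polynomial.eval_pow, Polynomial.eval_C, Polynomial.eval_X, one_mul] at hu
    linear_combination hu
  have hune : u ≠ 0 := by
    rintro rfl
    apply hc
    have : f c = 0 := by linear_combination huq
    exact (_root_.map_eq_zero f).mp this
  refine ⟨u, hune, ?_, by linear_combination -huq⟩
  set φ := iterateFrobenius K p r with hφdef
  have hφ : ∀ z : K, φ z = z ^ p ^ r := fun z => iterateFrobenius_def p r z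
  have hfx : f x ^ p ^ r = f x := algmap_pow_card p r hq x
  have hfc : f c ^ p ^ r = f c := algmap_pow_card p r hq c
  have h2 : (u ^ p ^ r) ^ 2 - f x * (u ^ p ^ r) + f c = 0 := by
    have h0 : φ (u ^ 2 - f x * u + f c) = φ 0 := congrArg φ huq
    simp only [map_add, map_sub, map_mul, map_pow, map_zero] at h0
    simp only [hφ, hfx, hfc] at h0
    exact h0
  have hfact : (u ^ p ^ r - u) * (u ^ p ^ r - (f x - u)) = 0 := by
    linear_combination h2 - huq
  rcases mul_eq_zero.mp hfact with h | h
  · have h : u ^ p ^ r = u := sub_eq_zero.mp h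
    rw [sq, pow_mul, h, h]
  · have h : u ^ p ^ r = f x - u := sub_eq_zero.mp h
    have : u ^ (p ^ r) ^ 2 = (u ^ p ^ r) ^ p ^ r := by rw [sq, pow_mul]
    rw [this, h]
    have h3 : (f x - u) ^ p ^ r = f x - u ^ p ^ r := by
      have := congrArg φ (rfl : f x - u = f x - u)
      calc (f x - u) ^ p ^ r = φ (f x - u) := (hφ _).symm
        _ = φ (f x) - φ u := map_sub _ _ _
        _ = f x - u ^ p ^ r := by rw [hφ, hφ, hfx]
    rw [h3, h, sub_sub_cancel]
end FF

section FF2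
variable {F : Type*} [Field F] [Fintype F] (p r : ℕ) [Fact p.Prime] [CharP F p]

local notation "K" => AlgebraicClosure F

set_option linter.unusedSectionVars false

theorem dickson_eval_algebraMap (c : F) (n : ℕ) (t : F) (u v : K)
    (hsum : u + v = algebraMap F K t) (hprod : u * v = algebraMap F K c) :
    algebraMap F K ((dickson 1 c n).eval t) = u ^ n + v ^ n := by
  have h : algebraMap F K ((dickson 1 c n).eval t)
      = (dickson 1 (algebraMap F K c) n).eval (algebraMap F K t) := by
    rw [← Polynomial.eval₂_at_apply, Polynomial.eval₂_eq_eval_map, map_dickson]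
  rw [h, ← hsum, ← hprod, dickson_eval_add]

/-- Sufficiency: if `gcd(n, q² - 1) = 1` then `D_n(·,c)` is injective on `F`. -/
theorem dickson_injective (hq : Fintype.card F = p ^ r) (hr : r ≠ 0) (c : F) (hc : c ≠ 0)
    (n : ℕ) (hn : 1 ≤ n) (hcop : Nat.Coprime n (p ^ r * p ^ r - 1)) :
    Function.Injective (fun t : F => (dickson 1 c n).eval t) := by
  intro t₁ t₂ hteq
  have hteq' : (dickson 1 c n).eval t₁ = (dickson 1 c n).eval t₂ := hteq
  have hq1 : 1 < p ^ r := Nat.one_lt_pow hr (Fact.out : p.Prime).one_lt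
  have hm1 : 1 ≤ p ^ r * p ^ r - 1 := by
    have h4 := Nat.mul_le_mul hq1 hq1
    omega
  have hmq : p ^ r * p ^ r - 1 + 1 = (p ^ r) ^ 2 := by rw [sq]; omega
  have hrou : ∀ w : K, w ≠ 0 → w ^ (p ^ r) ^ 2 = w → w ^ (p ^ r * p ^ r - 1) = 1 := by
    intro w hw hwq
    have h2 : w ^ (p ^ r * p ^ r - 1) * w = w := by rw [← pow_succ, hmq, hwq]
    have h3 : w ^ (p ^ r * p ^ r - 1) * w = 1 * w := by rw [h2, one_mul]
    exact mul_right_cancel₀ hw h3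
  have hfcne : algebraMap F K c ≠ 0 := fun h => hc ((_root_.map_eq_zero _).mp h)
  have hfc : (algebraMap F K c) ^ (p ^ r) ^ 2 = algebraMap F K c := by
    rw [sq, pow_mul, algmap_pow_card p r hq, algmap_pow_card p r hq]
  obtain ⟨u₁, hu₁ne, hu₁q, hu₁c⟩ := exists_split p r hq c t₁ hc
  obtain ⟨u₂, hu₂ne, hu₂q, hu₂c⟩ := exists_split p r hq c t₂ hc
  obtain ⟨v₁, hs₁, hp₁⟩ : ∃ v : K, u₁ + v = algebraMap F K t₁ ∧ u₁ * v = algebraMap F K c :=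
    ⟨algebraMap F K t₁ - u₁, by ring, hu₁c⟩
  obtain ⟨v₂, hs₂, hp₂⟩ : ∃ v : K, u₂ + v = algebraMap F K t₂ ∧ u₂ * v = algebraMap F K c :=
    ⟨algebraMap F K t₂ - u₂, by ring, hu₂c⟩
  have hv₁ne : v₁ ≠ 0 := fun h => hfcne (by rw [← hp₁, h, mul_zero])
  have hv₂ne : v₂ ≠ 0 := fun h => hfcne (by rw [← hp₂, h, mul_zero])
  have hv₁e : v₁ = algebraMap F K c * u₁⁻¹ := by
    field_simp
    linear_combination hp₁
  have hv₂e : v₂ = algebraMap F K c * u₂⁻¹ := by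
    field_simp
    linear_combination hp₂
  have hv₁q : v₁ ^ (p ^ r) ^ 2 = v₁ := by rw [hv₁e, mul_pow, inv_pow, hfc, hu₁q]
  have hv₂q : v₂ ^ (p ^ r) ^ 2 = v₂ := by rw [hv₂e, mul_pow, inv_pow, hfc, hu₂q]
  have hsum : u₁ ^ n + v₁ ^ n = u₂ ^ n + v₂ ^ n := by
    rw [← dickson_eval_algebraMap c n t₁ u₁ v₁ hs₁ hp₁,
      ← dickson_eval_algebraMap c n t₂ u₂ v₂ hs₂ hp₂, hteq']
  have hprod : u₁ ^ n * v₁ ^ n = u₂ ^ n * v₂ ^ n := by rw [← mul_pow, ← mul_pow, hp₁, hp₂]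
  have hfact : (u₁ ^ n - u₂ ^ n) * (u₁ ^ n - v₂ ^ n) = 0 := by
    linear_combination (u₁ ^ n) * hsum - hprod
  have hinj : algebraMap F K t₁ = algebraMap F K t₂ := by
    rcases mul_eq_zero.mp hfact with h | h
    · have h : u₁ ^ n = u₂ ^ n := sub_eq_zero.mp h
      have huu : u₁ = u₂ := pow_cancel_of_coprime hn hcop hm1
        (hrou u₁ hu₁ne hu₁q) (hrou u₂ hu₂ne hu₂q) h
      have hvv : v₁ = v₂ := by rw [hv₁e, hv₂e, huu]
      rw [← hs₁, ← hs₂, huu, hvv]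
    · have h : u₁ ^ n = v₂ ^ n := sub_eq_zero.mp h
      have huv : u₁ = v₂ := pow_cancel_of_coprime hn hcop hm1
        (hrou u₁ hu₁ne hu₁q) (hrou v₂ hv₂ne hv₂q) h
      have h5 : v₂ * v₁ = v₂ * u₂ := by
        calc v₂ * v₁ = u₁ * v₁ := by rw [huv]
          _ = algebraMap F K c := hp₁
          _ = u₂ * v₂ := hp₂.symm
          _ = v₂ * u₂ := mul_comm _ _
      have hvu : v₁ = u₂ := mul_left_cancel₀ hv₂ne h5
      rw [← hs₁, ← hs₂, huv, hvu]
      ring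
  exact (algebraMap F K).injective hinj
end FF2

section FF3
variable {F : Type*} [Field F] [Fintype F] (p r : ℕ) [Fact p.Prime] [CharP F p]

local notation "K" => AlgebraicClosure F

set_option linter.unusedSectionVars false

theorem dickson_not_injective_aux (hq : Fintype.card F = p ^ r) (hr : r ≠ 0)
    (c : F) (hc : c ≠ 0) (n : ℕ) (hn : 1 ≤ n) (ζ u : AlgebraicClosure F)
    (hu0 : u ≠ 0) (hζ0 : ζ ≠ 0) (hζn : ζ ^ n = 1) (hζ1 : ζ ≠ 1)
    (hne : ζ * u ^ 2 ≠ algebraMap F K c)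
    (hufix : u ^ p ^ r = u ∨ u ^ p ^ r * u = algebraMap F K c)
    (hwfix : (ζ * u) ^ p ^ r = ζ * u ∨ (ζ * u) ^ p ^ r * (ζ * u) = algebraMap F K c) :
    ¬ Function.Injective (fun t : F => (dickson 1 c n).eval t) := by
  have hfcne : algebraMap F K c ≠ 0 := fun h => hc ((_root_.map_eq_zero _).mp h)
  have hfcq : (algebraMap F K c) ^ p ^ r = algebraMap F K c := by
    rw [← map_pow, ← hq, FiniteField.pow_card]
  have hw0 : ζ * u ≠ 0 := mul_ne_zero hζ0 hu0
  -- key: for z with the fixity property, z + c'/z is fixed by x ↦ x^q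
  have key : ∀ z : K, z ≠ 0 → (z ^ p ^ r = z ∨ z ^ p ^ r * z = algebraMap F K c) →
      (z + algebraMap F K c * z⁻¹) ^ p ^ r = z + algebraMap F K c * z⁻¹ := by
    intro z hz hfix
    have hsplit : (z + algebraMap F K c * z⁻¹) ^ p ^ r
        = z ^ p ^ r + (algebraMap F K c) ^ p ^ r * (z ^ p ^ r)⁻¹ := by
      have h1 : iterateFrobenius K p r (z + algebraMap F K c * z⁻¹)
          = iterateFrobenius K p r z + iterateFrobenius K p r (algebraMap F K c)
            * (iterateFrobenius K p r z)⁻¹ := by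
        rw [map_add, map_mul, map_inv₀]
      simpa only [iterateFrobenius_def] using h1
    rcases hfix with h | h
    · rw [hsplit, h, hfcq]
    · have hzq : z ^ p ^ r = algebraMap F K c * z⁻¹ := by
        field_simp
        linear_combination h
      rw [hsplit, hzq, hfcq]
      field_simp
      ring
    -- end key
  obtain ⟨x₀, hx₀⟩ := mem_range_of_pow_card p r hq _ (key u hu0 hufix) hr
  obtain ⟨y₀, hy₀⟩ := mem_range_of_pow_card p r hq _ (key (ζ * u) hw0 hwfix) hr
  have heq : (dickson 1 c n).eval x₀ = (dickson 1 c n).eval y₀ := by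
    apply (algebraMap F K).injective
    rw [dickson_eval_algebraMap c n x₀ u (algebraMap F K c * u⁻¹) (by rw [hx₀])
      (by field_simp),
      dickson_eval_algebraMap c n y₀ (ζ * u) (algebraMap F K c * (ζ * u)⁻¹) (by rw [hy₀])
      (by field_simp)]
    have h2 : algebraMap F K c * (ζ * u)⁻¹ = ζ⁻¹ * (algebraMap F K c * u⁻¹) := by
      rw [mul_inv]
      ring
    rw [h2, mul_pow ζ u, hζn, one_mul, mul_pow ζ⁻¹, inv_pow, hζn, inv_one, one_mul]
  have hxy : x₀ ≠ y₀ := by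
    intro h
    have hfeq : u + algebraMap F K c * u⁻¹ = ζ * u + algebraMap F K c * (ζ * u)⁻¹ := by
      rw [← hx₀, ← hy₀, h]
    have hzero : (1 - ζ) * (ζ * u ^ 2 - algebraMap F K c) = 0 := by
      have h3 := hfeq
      field_simp at h3
      have hzero' : ((1 - ζ) * (ζ * u ^ 2 - algebraMap F K c)) * u = 0 := by
        linear_combination u * h3
      exact (mul_eq_zero.mp hzero').resolve_right hu0
    rcases mul_eq_zero.mp hzero with h4 | h4
    · exact hζ1 (by linear_combination -h4)
    · exact hne (by linear_combination h4)
  exact fun hinj => hxy (hinj heq)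
end FF3

section FF4
variable {F : Type*} [Field F] [Fintype F] (p r : ℕ) [Fact p.Prime] [CharP F p]
local notation "K" => AlgebraicClosure F
set_option linter.unusedSectionVars false

/-- Necessity: an odd prime `Q` dividing both `n` and `q² - 1` makes `D_n(·,c)` non-injective. -/
theorem dickson_not_injective (hq : Fintype.card F = p ^ r) (hr : r ≠ 0)
    (c : F) (hc : c ≠ 0) (n Q : ℕ) (hn : 1 ≤ n) (hQ : Q.Prime) (hQ2 : Q ≠ 2) (hQn : Q ∣ n)
    (hQdvd : Q ∣ p ^ r - 1 ∨ Q ∣ p ^ r + 1) :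
    ¬ Function.Injective (fun t : F => (dickson 1 c n).eval t) := by
  have hq1 : 1 < p ^ r := Nat.one_lt_pow hr (Fact.out : p.Prime).one_lt
  have hfcne : algebraMap F K c ≠ 0 := fun h => hc ((_root_.map_eq_zero _).mp h)
  have hQp : Q ≠ p := by
    rintro rfl
    have h1 : Q ∣ Q ^ r := dvd_pow_self Q hr
    have h2 : Q ∣ 1 := by
      rcases hQdvd with h | h
      · have h3 := Nat.dvd_sub h1 h
        rwa [Nat.sub_sub_self hq1.le] at h3
      · have h3 := Nat.dvd_sub h h1
        rwa [Nat.add_sub_cancel_left] at h3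
    exact hQ.one_lt.ne' (Nat.dvd_one.mp h2)
  haveI : NeZero ((Q : ℕ) : K) := by
    refine ⟨fun h => ?_⟩
    rw [CharP.cast_eq_zero_iff K p Q] at h
    exact hQp ((Nat.prime_dvd_prime_iff_eq (Fact.out : p.Prime) hQ).mp h).symm
  -- a primitive Q-th root of unity in K
  obtain ⟨ζ, hζroot⟩ := IsAlgClosed.exists_root (cyclotomic Q K) (by
    rw [degree_cyclotomic]
    exact_mod_cast (Nat.totient_pos.mpr hQ.pos).ne')
  have hprim : IsPrimitiveRoot ζ Q := (isRoot_cyclotomic_iff).mp hζroot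
  have hζQ : ζ ^ Q = 1 := hprim.pow_eq_one
  have hζ1 : ζ ≠ 1 := hprim.ne_one hQ.one_lt
  have hζ0 : ζ ≠ 0 := fun h => one_ne_zero (by rw [← hζQ, h, zero_pow hQ.pos.ne'])
  have hζ2 : ζ ^ 2 ≠ 1 := by
    intro h
    have h6 := hprim.dvd_of_pow_eq_one 2 h
    exact hQ2 ((Nat.prime_dvd_prime_iff_eq hQ Nat.prime_two).mp h6)
  have hζn : ζ ^ n = 1 := by
    obtain ⟨s, rfl⟩ := hQn
    rw [pow_mul, hζQ, one_pow]
  rcases hQdvd with hA | hB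
  · -- Case A : Q ∣ q - 1, so ζ^q = ζ
    have hζfix : ζ ^ p ^ r = ζ := by
      obtain ⟨s, hs⟩ := hA
      have h1 : p ^ r = Q * s + 1 := by omega
      rw [h1, pow_add, pow_mul, hζQ, one_pow, one_mul, pow_one]
    have hζ2fix : (ζ * ζ) ^ p ^ r = ζ * ζ := by rw [mul_pow, hζfix]
    by_cases hch : ζ * 1 ^ 2 = algebraMap F K c
    · -- use u = ζ
      refine dickson_not_injective_aux p r hq hr c hc n hn ζ ζ hζ0 hζ0 hζn hζ1 ?_
        (Or.inl hζfix) (Or.inl hζ2fix)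
      intro h
      rw [one_pow, mul_one] at hch
      apply hζ2
      have h3 : ζ * ζ ^ 2 = ζ := by rw [h, ← hch]
      have h4 : ζ * (ζ ^ 2 - 1) = 0 := by linear_combination h3
      rcases mul_eq_zero.mp h4 with h5 | h5
      · exact absurd h5 hζ0
      · linear_combination h5
    · refine dickson_not_injective_aux p r hq hr c hc n hn ζ 1 one_ne_zero hζ0 hζn hζ1 hch
        (Or.inl (one_pow _)) (Or.inl (by rw [mul_one, hζfix]))
  · -- Case B : Q ∣ q + 1
    have hζq1 : ζ ^ (p ^ r + 1) = 1 := by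
      obtain ⟨s, hs⟩ := hB
      rw [hs, pow_mul, hζQ, one_pow]
    -- a (q+1)-st root of c
    obtain ⟨u₀, hu₀root⟩ := IsAlgClosed.exists_root
      (X ^ (p ^ r + 1) - C (algebraMap F K c)) (by
        rw [degree_X_pow_sub_C (Nat.succ_pos _)]
        intro h
        exact Nat.succ_ne_zero (p ^ r) (by exact_mod_cast h))
    have hu₀ : u₀ ^ (p ^ r + 1) = algebraMap F K c := by
      have := hu₀root
      simp only [Polynomial.IsRoot, Polynomial.eval_sub, Polynomial.eval_pow,
        Polynomial.eval_X, Polynomial.eval_C, sub_eq_zero] at this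
      exact this
    have hu₀0 : u₀ ≠ 0 := by
      intro h
      rw [h, zero_pow (Nat.succ_ne_zero _)] at hu₀
      exact hfcne hu₀.symm
    have hfixgen : ∀ v : K, v ^ (p ^ r + 1) = algebraMap F K c →
        v ^ p ^ r * v = algebraMap F K c := by
      intro v hv
      rw [← pow_succ, hv]
    have hζufix : ∀ k : ℕ, (ζ ^ k * u₀) ^ (p ^ r + 1) = algebraMap F K c := by
      intro k
      rw [mul_pow, ← pow_mul, mul_comm k (p ^ r + 1), pow_mul, hζq1, one_pow, one_mul, hu₀]
    by_cases hch : ζ * u₀ ^ 2 = algebraMap F K c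
    · -- use u = ζ * u₀
      have h1 : (ζ * (ζ * u₀)) ^ (p ^ r + 1) = algebraMap F K c := by
        have := hζufix 2
        rw [pow_two] at this
        rw [← mul_assoc]
        exact this
      refine dickson_not_injective_aux p r hq hr c hc n hn ζ (ζ * u₀)
        (mul_ne_zero hζ0 hu₀0) hζ0 hζn hζ1 ?_
        (Or.inr (hfixgen _ (by simpa [pow_one] using hζufix 1)))
        (Or.inr (hfixgen _ h1))
      intro h
      apply hζ2
      have h3 : ζ * (ζ * u₀) ^ 2 = ζ ^ 2 * (ζ * u₀ ^ 2) := by ring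
      rw [hch] at h3
      -- h : ζ^2 * c = c  → ζ^2 = 1
      rw [h3] at h
      have h4 := mul_right_cancel₀ hfcne (by rw [h, one_mul] : ζ ^ 2 * algebraMap F K c
        = 1 * algebraMap F K c)
      exact h4
    · refine dickson_not_injective_aux p r hq hr c hc n hn ζ u₀ hu₀0 hζ0 hζn hζ1 hch
        (Or.inr (hfixgen _ hu₀)) (Or.inr (hfixgen _ (by simpa [pow_one] using hζufix 1)))
end FF4

section POW
variable {F : Type*} [Field F] [Fintype F]

theorem pow_map_injective (n : ℕ) (hn : 1 ≤ n) (hcop : Nat.Coprime n (Fintype.card F - 1)) :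
    Function.Injective (fun t : F => t ^ n) := by
  intro t₁ t₂ h
  simp only at h
  have hm1 : 1 ≤ Fintype.card F - 1 := by have := Fintype.one_lt_card (α := F); omega
  rcases eq_or_ne t₁ 0 with rfl | h₁
  · rw [zero_pow (by omega), eq_comm, pow_eq_zero_iff (by omega)] at h
    exact h.symm
  · rcases eq_or_ne t₂ 0 with rfl | h₂
    · rw [zero_pow (by omega), pow_eq_zero_iff (by omega)] at h
      exact h
    · exact pow_cancel_of_coprime hn hcop hm1
        (FiniteField.pow_card_sub_one_eq_one t₁ h₁)
        (FiniteField.pow_card_sub_one_eq_one t₂ h₂) h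

theorem pow_map_not_injective (n Q : ℕ) (hn : 1 ≤ n) (hQ : Q.Prime) (hQn : Q ∣ n)
    (hQq : Q ∣ Fintype.card F - 1) :
    ¬ Function.Injective (fun t : F => t ^ n) := by
  haveI : Fact Q.Prime := ⟨hQ⟩
  obtain ⟨g, hg⟩ := exists_prime_orderOf_dvd_card' (G := Fˣ) Q
    (by rwa [Nat.card_units, Nat.card_eq_fintype_card])
  have hgQ : (g : F) ^ Q = 1 := by
    have h7 : g ^ Q = 1 := by rw [← hg, pow_orderOf_eq_one]
    rw [← Units.val_pow_eq_pow_val, h7, Units.val_one]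
  have hgn : (g : F) ^ n = 1 := by
    obtain ⟨s, rfl⟩ := hQn
    rw [pow_mul, hgQ, one_pow]
  have hg1 : (g : F) ≠ 1 := by
    intro h
    have : g = 1 := Units.ext h
    rw [this, orderOf_one] at hg
    exact hQ.one_lt.ne' hg.symm
  intro hinj
  have := hinj (a₁ := (g : F)) (a₂ := 1) (by simp only; rw [hgn, one_pow])
  exact hg1 this
end POW


theorem exists_crt (s : Finset ℕ) (hs : ∀ Q ∈ s, Q.Prime) (g : ℕ → ℕ) :
    ∃ a : ℕ, ∀ Q ∈ s, a ≡ g Q [MOD Q] := by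
  classical
  induction s using Finset.induction_on with
  | empty => exact ⟨0, fun Q hQ => absurd hQ (Finset.notMem_empty Q)⟩
  | @insert Q₀ s hQ₀s ih =>
    obtain ⟨a, ha⟩ := ih (fun Q hQ => hs Q (Finset.mem_insert_of_mem hQ))
    have hQ₀ : Q₀.Prime := hs Q₀ (Finset.mem_insert_self _ _)
    have hcop : Q₀.Coprime (∏ Q ∈ s, Q) :=
      Nat.Coprime.prod_right fun Q hQ =>
        (Nat.coprime_primes hQ₀ (hs Q (Finset.mem_insert_of_mem hQ))).mpr
          (fun h => hQ₀s (h ▸ hQ))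
    obtain ⟨k, hk1, hk2⟩ := Nat.chineseRemainder hcop (g Q₀) a
    refine ⟨k, fun Q hQ => ?_⟩
    rcases Finset.mem_insert.mp hQ with rfl | hQs
    · exact hk1
    · exact ((Nat.ModEq.of_dvd (Finset.dvd_prod_of_mem _ hQs) hk2).trans (ha Q hQs))

theorem key_residue (n b : ℕ) (hn : 1 ≤ n) (hb : ∀ Q : ℕ, Q.Prime → Q ∣ n → b + 1 < Q) :
    ∃ N a : ℕ, 0 < N ∧ Nat.Coprime a N ∧
      ∀ p : ℕ, p.Prime → p ≡ a [MOD N] →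
        ∀ k : ℕ, 1 ≤ k → k ≤ b → Nat.Coprime n (p ^ k - 1) := by
  classical
  set s := n.primeFactors with hs
  have hsP : ∀ Q ∈ s, Q.Prime := fun Q hQ => Nat.prime_of_mem_primeFactors hQ
  -- choose a generator mod every Q in s
  have hgen : ∀ Q ∈ s, ∃ x : ZMod Q, orderOf x = Q - 1 := by
    intro Q hQ
    haveI : Fact Q.Prime := ⟨hsP Q hQ⟩
    obtain ⟨ξ, hξ⟩ := IsCyclic.exists_generator (α := (ZMod Q)ˣ)
    refine ⟨(ξ : ZMod Q), ?_⟩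
    rw [orderOf_units, orderOf_eq_card_of_forall_mem_zpowers hξ, Nat.card_units,
      Nat.card_zmod]
  choose x hx using hgen
  set g : ℕ → ℕ := fun Q => if h : Q ∈ s then (x Q h).val else 0 with hg
  obtain ⟨a, ha⟩ := exists_crt s hsP g
  set N := ∏ Q ∈ s, Q with hN
  have hxne : ∀ Q (hQ : Q ∈ s), ((a : ZMod Q)) = x Q hQ := by
    intro Q hQ
    haveI : NeZero Q := ⟨(hsP Q hQ).pos.ne'⟩
    have h1 : a ≡ (x Q hQ).val [MOD Q] := by
      simpa only [hg, dif_pos hQ] using ha Q hQ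
    have h2 : ((a : ℕ) : ZMod Q) = (((x Q hQ).val : ℕ) : ZMod Q) :=
      (ZMod.natCast_eq_natCast_iff _ _ _).mpr h1
    rwa [ZMod.natCast_val, ZMod.cast_id] at h2
  have hbound : ∀ Q (hQ : Q ∈ s), b + 1 < Q :=
    fun Q hQ => hb Q (hsP Q hQ) (Nat.dvd_of_mem_primeFactors hQ)
  have hcop : Nat.Coprime a N := by
    apply Nat.Coprime.prod_right
    intro Q hQ
    haveI : Fact Q.Prime := ⟨hsP Q hQ⟩
    rw [Nat.coprime_comm]
    apply (Nat.Prime.coprime_iff_not_dvd (hsP Q hQ)).mpr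
    intro hdvd
    have h0 : ((a : ℕ) : ZMod Q) = 0 := (ZMod.natCast_eq_zero_iff a Q).mpr hdvd
    rw [hxne Q hQ] at h0
    -- x is a unit hence nonzero
    have h1 : (x Q hQ) ^ (Q - 1) = 1 := by rw [← hx Q hQ]; exact pow_orderOf_eq_one _
    rw [h0, zero_pow (by have := hbound Q hQ; omega : Q - 1 ≠ 0)] at h1
    exact one_ne_zero h1.symm
  refine ⟨N, a, Finset.prod_pos (fun Q hQ => (hsP Q hQ).pos), hcop, ?_⟩
  intro p hp hpa k hk1 hkb
  rw [Nat.coprime_comm]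
  by_contra hncop
  obtain ⟨r, hr, hrd⟩ := Nat.exists_prime_and_dvd hncop
  have hrp : r ∣ p ^ k - 1 := hrd.trans (Nat.gcd_dvd_left _ _)
  have hrn : r ∣ n := hrd.trans (Nat.gcd_dvd_right _ _)
  have hrs : r ∈ s := Nat.mem_primeFactors.mpr ⟨hr, hrn, by omega⟩
  haveI : Fact r.Prime := ⟨hr⟩
  have hpx : ((p : ℕ) : ZMod r) = x r hrs := by
    have h1 : p ≡ a [MOD r] := Nat.ModEq.of_dvd (Finset.dvd_prod_of_mem _ hrs) hpa
    rw [(ZMod.natCast_eq_natCast_iff _ _ _).mpr h1, hxne r hrs]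
  have hpk1 : 1 ≤ p ^ k := Nat.one_le_pow _ _ hp.pos
  have hcast : ((p ^ k - 1 : ℕ) : ZMod r) = 0 := (ZMod.natCast_eq_zero_iff _ _).mpr hrp
  rw [Nat.cast_sub hpk1, Nat.cast_pow, Nat.cast_one, sub_eq_zero] at hcast
  have hord : orderOf ((p : ℕ) : ZMod r) = r - 1 := by rw [hpx]; exact hx r hrs
  have hdvd2 : (r - 1) ∣ k := by
    rw [← hord]
    exact orderOf_dvd_of_pow_eq_one hcast
  have hle : r - 1 ≤ k := Nat.le_of_dvd (by omega) hdvd2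
  have := hbound r hrs
  omega

section MAIN

set_option linter.unusedVariables false

theorem galois_card (p j : ℕ) [Fact p.Prime] (hj : j ≠ 0) [Fintype (GaloisField p j)] :
    Fintype.card (GaloisField p j) = p ^ j := by
  rw [← Nat.card_eq_fintype_card]
  exact GaloisField.card p j hj



theorem stmt_17_fwd (n l : ℕ) (hn : 1 ≤ n) (hl : 1 ≤ l) (c : ℚ)
    (hS : {p : ℕ | ∃ hp : p.Prime,
        ¬ p ∣ c.den ∧ (c ≠ 0 → ¬ ((p : ℤ) ∣ c.num)) ∧ DicksonPermutes p hp c n l}.Infinite) :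
    ∀ Q : ℕ, Q.Prime → Q ∣ n → (if c = 0 then l + 1 else 2 * l + 1) < Q := by
  classical
  intro Q hQ hQn
  -- Step 1: n must be odd.
  have hodd : ¬ 2 ∣ n := by
    intro h2n
    obtain ⟨p, hpS, hp2⟩ := hS.exists_gt 2
    obtain ⟨hp, hden, hnum, hperm⟩ := hpS
    haveI : Fact p.Prime := ⟨hp⟩
    have hbij := hperm 1 le_rfl hl
    have heq : (fun t : GaloisField p 1 => Polynomial.eval t
        (dickson 1 ((c.num : GaloisField p 1) * ((c.den : GaloisField p 1))⁻¹) n)) (-1)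
        = (fun t : GaloisField p 1 => Polynomial.eval t
        (dickson 1 ((c.num : GaloisField p 1) * ((c.den : GaloisField p 1))⁻¹) n)) 1 := by
      simp only
      rw [show (-1 : GaloisField p 1) = -(1 : GaloisField p 1) from rfl, dickson_eval_neg,
        Even.neg_one_pow ((even_iff_two_dvd (a := n)).mpr h2n), one_mul]
    have h3 : (-1 : GaloisField p 1) = 1 := hbij.injective heq
    have h4 : ((2 : ℕ) : GaloisField p 1) = 0 := by
      push_cast
      linear_combination -h3
    rw [CharP.cast_eq_zero_iff (GaloisField p 1) p 2] at h4
    have := Nat.le_of_dvd (by omega) h4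
    omega
  have hQ2 : Q ≠ 2 := fun h => hodd (h ▸ hQn)
  by_contra hlt
  push_neg at hlt
  obtain ⟨p, hpS, hpgt⟩ := hS.exists_gt (Q + 2)
  obtain ⟨hp, hden, hnum, hperm⟩ := hpS
  haveI : Fact p.Prime := ⟨hp⟩
  haveI : Fact Q.Prime := ⟨hQ⟩
  have hpQ : p ≠ Q := by omega
  have hcoppQ : Nat.Coprime p Q := (Nat.coprime_primes hp hQ).mpr hpQ
  set α : (ZMod Q)ˣ := ZMod.unitOfCoprime p hcoppQ with hαdef
  set d := orderOf α with hd
  have hα : ((α : ZMod Q)) = (p : ZMod Q) := ZMod.coe_unitOfCoprime p hcoppQ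
  have hdd : d ∣ Q - 1 := by
    have h1 : d ∣ Fintype.card (ZMod Q)ˣ := orderOf_dvd_card
    rwa [ZMod.card_units] at h1
  have hd1 : 1 ≤ d := (orderOf_pos α)
  have hdle : d ≤ Q - 1 := Nat.le_of_dvd (by have := hQ.two_le; omega) hdd
  have hpd1 : ∀ k : ℕ, d ∣ k → Q ∣ p ^ k - 1 := by
    intro k hk
    have h1 : α ^ k = 1 := orderOf_dvd_iff_pow_eq_one.mp hk
    have h2 : ((p : ℕ) : ZMod Q) ^ k = 1 := by
      rw [← hα, ← Units.val_pow_eq_pow_val, h1, Units.val_one]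
    have h3 : ((p ^ k - 1 : ℕ) : ZMod Q) = 0 := by
      rw [Nat.cast_sub (Nat.one_le_pow _ _ hp.pos), Nat.cast_pow, Nat.cast_one, h2, sub_self]
    exact (ZMod.natCast_eq_zero_iff _ _).mp h3
  by_cases hc0 : c = 0
  · rw [if_pos hc0] at hlt
    have hjl : d ≤ l := by omega
    have hbij := hperm d hd1 hjl
    haveI : Fintype (GaloisField p d) := Fintype.ofFinite _
    have hcard := galois_card p d (by omega)
    have hcoef : ((c.num : GaloisField p d) * ((c.den : GaloisField p d))⁻¹) = 0 := by
      simp [hc0]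
    rw [hcoef] at hbij
    have hfun : (fun t : GaloisField p d => Polynomial.eval t (dickson 1 (0 : GaloisField p d) n))
        = fun t : GaloisField p d => t ^ n := by
      funext t
      rw [dickson_one_zero_of_pos n hn, Polynomial.eval_pow, Polynomial.eval_X]
    rw [hfun] at hbij
    exact pow_map_not_injective n Q hn hQ hQn
      (by rw [hcard]; exact hpd1 d dvd_rfl) hbij.injective
  · rw [if_neg hc0] at hlt
    have hQ3 : 3 ≤ Q := by have := hQ.two_le; omega
    have hQ1even : 2 ∣ Q - 1 := by
      obtain ⟨m, hm⟩ := hQ.odd_of_ne_two hQ2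
      omega
    obtain ⟨j, hj1, hjl, hdvd2j⟩ : ∃ j : ℕ, 1 ≤ j ∧ j ≤ l ∧ d ∣ 2 * j := by
      by_cases h2d : 2 ∣ d
      · refine ⟨d / 2, by omega, by omega, ?_⟩
        have : 2 * (d / 2) = d := by omega
        rw [this]
      · have hdne : d ≠ Q - 1 := by
          intro h
          rw [h] at h2d
          exact h2d hQ1even
        obtain ⟨k, hk⟩ := hdd
        have hk2 : 2 ≤ k := by
          rcases Nat.lt_or_ge k 2 with h | h
          · interval_cases k <;> omega
          · exact h
        have h2d : 2 * d ≤ Q - 1 := by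
          calc 2 * d ≤ k * d := Nat.mul_le_mul_right d hk2
            _ = Q - 1 := by rw [hk]; ring
        exact ⟨d, hd1, by omega, ⟨2, by ring⟩⟩
    have hQdvd : Q ∣ p ^ (2 * j) - 1 := hpd1 _ hdvd2j
    have hfac : p ^ (2 * j) - 1 = (p ^ j - 1) * (p ^ j + 1) := by
      obtain ⟨t, ht⟩ : ∃ t, p ^ j = t + 1 := ⟨p ^ j - 1, by have := Nat.one_le_pow j p hp.pos; omega⟩
      rw [two_mul, pow_add, ht]
      have e1 : (t + 1) * (t + 1) = t * t + 2 * t + 1 := by ring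
      have e2 : (t + 1 - 1) * (t + 1 + 1) = t * t + 2 * t := by
        rw [Nat.add_sub_cancel]
        ring
      omega
    have hQor : Q ∣ p ^ j - 1 ∨ Q ∣ p ^ j + 1 := (Nat.Prime.dvd_mul hQ).mp (hfac ▸ hQdvd)
    have hbij := hperm j hj1 hjl
    haveI : Fintype (GaloisField p j) := Fintype.ofFinite _
    have hcard := galois_card p j (by omega)
    have hcne : ((c.num : GaloisField p j) * ((c.den : GaloisField p j))⁻¹) ≠ 0 := by
      apply mul_ne_zero
      · intro h
        rw [CharP.intCast_eq_zero_iff (GaloisField p j) p] at h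
        exact (hnum hc0) h
      · apply inv_ne_zero
        intro h
        rw [CharP.cast_eq_zero_iff (GaloisField p j) p] at h
        exact hden h
    exact dickson_not_injective p j hcard (by omega) _ hcne n Q hn hQ hQ2 hQn hQor
      hbij.injective

/-- Backward direction. -/
theorem stmt_17_bwd (n l : ℕ) (hn : 1 ≤ n) (hl : 1 ≤ l) (c : ℚ)
    (hbound : ∀ Q : ℕ, Q.Prime → Q ∣ n → (if c = 0 then l + 1 else 2 * l + 1) < Q) :
    {p : ℕ | ∃ hp : p.Prime,
        ¬ p ∣ c.den ∧ (c ≠ 0 → ¬ ((p : ℤ) ∣ c.num)) ∧ DicksonPermutes p hp c n l}.Infinite := by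
  classical
  set b : ℕ := if c = 0 then l else 2 * l with hb
  have hbQ : ∀ Q : ℕ, Q.Prime → Q ∣ n → b + 1 < Q := by
    intro Q hQ hQn
    have := hbound Q hQ hQn
    by_cases hc0 : c = 0 <;> simp [hb, hc0] at this ⊢ <;> omega
  obtain ⟨N, a, hNpos, hcop, hgood⟩ := key_residue n b hn hbQ
  haveI : NeZero N := ⟨hNpos.ne'⟩
  have hunit : IsUnit ((a : ℕ) : ZMod N) := (ZMod.isUnit_iff_coprime a N).mpr hcop
  have hT : {p : ℕ | p.Prime ∧ ((p : ℕ) : ZMod N) = ((a : ℕ) : ZMod N)}.Infinite :=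
    Nat.infinite_setOfPred_prime_and_eq_mod hunit
  have hfin1 : {p : ℕ | p ∣ c.den}.Finite :=
    Set.Finite.subset (Set.finite_Iic c.den) (fun p hp => Nat.le_of_dvd c.pos hp)
  have hfin2 : {p : ℕ | c ≠ 0 ∧ (p : ℤ) ∣ c.num}.Finite := by
    apply Set.Finite.subset (Set.finite_Iic c.num.natAbs)
    rintro p ⟨hc0, hdvd⟩
    have h1 : p ∣ c.num.natAbs := by
      rw [← Int.natAbs_natCast p]
      exact Int.natAbs_dvd_natAbs.mpr hdvd
    exact Nat.le_of_dvd (Int.natAbs_pos.mpr (Rat.num_ne_zero.mpr hc0)) h1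
  apply Set.Infinite.mono _ ((hT.diff hfin1).diff hfin2)
  rintro p ⟨⟨⟨hp, hpa⟩, hpden⟩, hpnum⟩
  simp only [Set.mem_setOf_eq] at hpden hpnum ⊢
  refine ⟨hp, hpden, fun h1 h2 => hpnum ⟨h1, h2⟩, ?_⟩
  haveI : Fact p.Prime := ⟨hp⟩
  intro j hj1 hjl
  haveI : Fintype (GaloisField p j) := Fintype.ofFinite _
  have hj0 : j ≠ 0 := by omega
  have hcard : Fintype.card (GaloisField p j) = p ^ j := galois_card p j hj0
  have hmod : p ≡ a [MOD N] := (ZMod.natCast_eq_natCast_iff _ _ _).mp hpa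
  rw [← Finite.injective_iff_bijective]
  by_cases hc0 : c = 0
  · have hcoef : ((c.num : GaloisField p j) * ((c.den : GaloisField p j))⁻¹) = 0 := by
      simp [hc0]
    rw [hcoef]
    have hfun : (fun t : GaloisField p j => Polynomial.eval t (dickson 1 (0 : GaloisField p j) n))
        = fun t : GaloisField p j => t ^ n := by
      funext t
      rw [dickson_one_zero_of_pos n hn, Polynomial.eval_pow, Polynomial.eval_X]
    rw [hfun]
    apply pow_map_injective n hn
    rw [hcard]
    have : b = l := by simp [hb, hc0]
    exact hgood p hp hmod j hj1 (by omega)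
  · have hcne : ((c.num : GaloisField p j) * ((c.den : GaloisField p j))⁻¹) ≠ 0 := by
      apply mul_ne_zero
      · intro h
        rw [CharP.intCast_eq_zero_iff (GaloisField p j) p] at h
        exact hpnum ⟨hc0, h⟩
      · apply inv_ne_zero
        intro h
        rw [CharP.cast_eq_zero_iff (GaloisField p j) p] at h
        exact hpden h
    apply dickson_injective p j hcard hj0 _ hcne n hn
    have h2j : p ^ j * p ^ j = p ^ (2 * j) := by rw [two_mul, pow_add]
    rw [h2j]
    have hbl : b = 2 * l := by simp [hb, hc0]
    exact hgood p hp hmod (2 * j) (by omega) (by omega)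


/-- **Global permutation criterion for Dickson polynomials.**
Let `n, l ≥ 1` and `c ∈ ℚ`, and let `D_n(x,c)` be the degree-`n` Dickson polynomial of the
first kind.  There are infinitely many primes `p` (at which `c` is integral, and with
`c mod p ≠ 0` whenever `c ≠ 0`) such that `t ↦ D_n(t, c mod p)` is a bijection of `𝔽_{p^j}`
for every `1 ≤ j ≤ l`, if and only if every prime factor `Q` of `n` satisfies `Q > 2l+1`
(when `c ≠ 0`), resp. `Q > l+1` (when `c = 0`). -/
theorem stmt_17 (n l : ℕ) (hn : 1 ≤ n) (hl : 1 ≤ l) (c : ℚ) :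
    {p : ℕ | ∃ hp : p.Prime,
        ¬ p ∣ c.den ∧ (c ≠ 0 → ¬ ((p : ℤ) ∣ c.num)) ∧ DicksonPermutes p hp c n l}.Infinite
      ↔ ∀ Q : ℕ, Q.Prime → Q ∣ n → (if c = 0 then l + 1 else 2 * l + 1) < Q := by
  constructor
  · exact stmt_17_fwd n l hn hl c
  · exact stmt_17_bwd n l hn hl c

end MAIN
end
end
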